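/- arXiv:2006.11756 — 5 statements merged into one kernel-verified Lean document; each statement's English description precedes it below -/
import Mathlib

section
/- For ξ ~ Multinomial(m, x) with x ∈ S_d, and for any δ > 0, there exist constants c_d, C_d > 0 (depending only on d) such that ∑_{k : ‖k/m − x‖₁ > δ} P_{k,m}(x) ≤ C_d e^{−c_d δ² m} for all m ≥ 1, uniformly in x ∈ S_d. -/
open scoped BigOperators Classical
open Finset Real Filter MeasureTheory

/-- Multinomial(m, x) probability mass at k. -/
noncomputable def multinomialPMF (d m : ℕ) (x : Fin d → ℝ) (k : Fin d → ℕ) : ℝ :=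
  ((m.factorial : ℝ) / (((m - ∑ i, k i).factorial : ℝ) * ∏ i, ((k i).factorial : ℝ))) *
    (1 - ∑ i, x i) ^ (m - ∑ i, k i) * ∏ i, (x i) ^ (k i)

/-- The index set ℕ₀^d ∩ m·S_d. -/
noncomputable def multiIndex (d m : ℕ) : Finset (Fin d → ℕ) :=
  (Fintype.piFinset fun _ => Finset.range (m + 1)).filter fun k => ∑ i, k i ≤ m

/-- The d-dimensional unit simplex. -/
def simplex (d : ℕ) : Set (Fin d → ℝ) :=
  {x | (∀ i, 0 ≤ x i ∧ x i ≤ 1) ∧ ∑ i, x i ≤ 1}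


lemma nat_multinomial_le {n m : ℕ} (k : Fin n → ℕ) (h : ∑ j, k j = m) :
    Nat.multinomial Finset.univ k * ∏ j, k j ^ k j ≤ m ^ m := by
  have := Finset.sum_pow_eq_sum_piAntidiag (Finset.univ : Finset (Fin n)) k m
  rw [h] at this
  rw [this]
  refine Finset.single_le_sum (f := fun g => Nat.multinomial Finset.univ g * ∏ j, k j ^ g j)
    (fun g _ => Nat.zero_le _) ?_
  rw [Finset.mem_piAntidiag]
  exact ⟨h, fun i _ => Finset.mem_univ i⟩

lemma factor_le (K : ℕ) (c : ℝ) (hc : 0 ≤ c) :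
    (c / K) ^ K ≤ Real.exp (2 * Real.sqrt (c * K) - 2 * K) := by
  rcases Nat.eq_zero_or_pos K with hK | hK
  · simp [hK]
  have hKR : (0:ℝ) < K := by exact_mod_cast hK
  rcases eq_or_lt_of_le hc with hc0 | hc0
  · rw [← hc0]
    rw [zero_div, zero_pow hK.ne']
    exact (Real.exp_pos _).le
  have hb : (0:ℝ) < c / K := div_pos hc0 hKR
  have hlog : Real.log (c / K) ≤ 2 * (Real.sqrt (c / K) - 1) := by
    have h1 : Real.log (Real.sqrt (c / K)) ≤ Real.sqrt (c / K) - 1 :=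
      Real.log_le_sub_one_of_pos (Real.sqrt_pos.mpr hb)
    have h2 : Real.log (c / K) = 2 * Real.log (Real.sqrt (c / K)) := by
      rw [Real.log_sqrt hb.le]; ring
    linarith
  have hKs : (K:ℝ) * Real.sqrt (c / K) = Real.sqrt (c * K) := by
    rw [← Real.sqrt_sq hKR.le, ← Real.sqrt_mul (by positivity)]
    congr 1
    field_simp
    ring_nf; rw [Real.sq_sqrt (by positivity)]
  calc (c / K) ^ K = Real.exp ((K:ℝ) * Real.log (c / K)) := by
        rw [← Real.log_pow, Real.exp_log (by positivity)]
    _ ≤ Real.exp (2 * Real.sqrt (c * K) - 2 * K) := by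
        apply Real.exp_le_exp.mpr
        have := mul_le_mul_of_nonneg_left hlog hKR.le
        nlinarith [hKs]

lemma hellinger_bound {n : ℕ} (p q : Fin n → ℝ) (hp : ∀ j, 0 ≤ p j) (hq : ∀ j, 0 ≤ q j)
    (hps : ∑ j, p j = 1) (hqs : ∑ j, q j = 1) :
    (∑ j, |q j - p j|) ^ 2 ≤ 4 * (2 - 2 * ∑ j, Real.sqrt (p j * q j)) := by
  have hfact : ∀ j, |q j - p j| = |Real.sqrt (q j) - Real.sqrt (p j)| *
      (Real.sqrt (q j) + Real.sqrt (p j)) := by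
    intro j
    rw [← abs_of_nonneg (show 0 ≤ Real.sqrt (q j) + Real.sqrt (p j) by positivity), ← abs_mul]
    congr 1
    have := Real.sq_sqrt (hq j)
    have := Real.sq_sqrt (hp j)
    nlinarith
  have hCS := Finset.sum_mul_sq_le_sq_mul_sq Finset.univ
      (fun j => |Real.sqrt (q j) - Real.sqrt (p j)|) (fun j => Real.sqrt (q j) + Real.sqrt (p j))
  have hH : ∑ j, |Real.sqrt (q j) - Real.sqrt (p j)| ^ 2
      = 2 - 2 * ∑ j, Real.sqrt (p j * q j) := by
    have : ∀ j, |Real.sqrt (q j) - Real.sqrt (p j)| ^ 2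
        = q j + p j - 2 * Real.sqrt (p j * q j) := by
      intro j
      rw [sq_abs, Real.sqrt_mul (hp j)]
      have := Real.sq_sqrt (hq j)
      have := Real.sq_sqrt (hp j)
      nlinarith
    rw [Finset.sum_congr rfl (fun j _ => this j)]
    rw [Finset.sum_sub_distrib, Finset.sum_add_distrib, hps, hqs, ← Finset.mul_sum]
    ring
  have hG : ∑ j, (Real.sqrt (q j) + Real.sqrt (p j)) ^ 2 ≤ 4 := by
    have : ∀ j, (Real.sqrt (q j) + Real.sqrt (p j)) ^ 2 ≤ 2 * (q j + p j) := by
      intro j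
      have h1 := Real.sq_sqrt (hq j)
      have h2 := Real.sq_sqrt (hp j)
      nlinarith [sq_nonneg (Real.sqrt (q j) - Real.sqrt (p j))]
    calc ∑ j, (Real.sqrt (q j) + Real.sqrt (p j)) ^ 2 ≤ ∑ j, 2 * (q j + p j) :=
          Finset.sum_le_sum fun j _ => this j
      _ = 4 := by rw [← Finset.mul_sum, Finset.sum_add_distrib, hps, hqs]; ring
  have hH0 : 0 ≤ 2 - 2 * ∑ j, Real.sqrt (p j * q j) := by
    rw [← hH]; positivity
  calc (∑ j, |q j - p j|) ^ 2
      = (∑ j, |Real.sqrt (q j) - Real.sqrt (p j)| * (Real.sqrt (q j) + Real.sqrt (p j))) ^ 2 := by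
        rw [Finset.sum_congr rfl fun j _ => hfact j]
    _ ≤ (∑ j, |Real.sqrt (q j) - Real.sqrt (p j)| ^ 2) *
        (∑ j, (Real.sqrt (q j) + Real.sqrt (p j)) ^ 2) := hCS
    _ ≤ 4 * (2 - 2 * ∑ j, Real.sqrt (p j * q j)) := by
        rw [hH]; rw [mul_comm]
        exact mul_le_mul_of_nonneg_right hG hH0 |>.trans_eq (by ring) |>.trans_eq rfl

lemma pointwise_bound {n m : ℕ} (hm : 1 ≤ m) (k : Fin n → ℕ) (p : Fin n → ℝ)
    (hp : ∀ j, 0 ≤ p j) (hps : ∑ j, p j = 1) (hks : ∑ j, k j = m) :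
    ((m.factorial : ℝ) / ∏ j, ((k j).factorial : ℝ)) * ∏ j, p j ^ k j
      ≤ Real.exp (-(m : ℝ) / 4 * (∑ j, |(k j : ℝ) / m - p j|) ^ 2) := by
  have hmR : (0:ℝ) < m := by exact_mod_cast hm
  have hprodfact : (0:ℝ) < ∏ j, ((k j).factorial : ℝ) := by
    apply Finset.prod_pos; intro j _; exact_mod_cast (k j).factorial_pos
  have hA : ((m.factorial : ℝ) / ∏ j, ((k j).factorial : ℝ))
      = (Nat.multinomial Finset.univ k : ℝ) := by
    rw [div_eq_iff hprodfact.ne', ← Nat.cast_prod, ← Nat.cast_mul]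
    norm_cast
    rw [mul_comm, Nat.multinomial_spec, hks]
  have hkk : (0:ℝ) < ∏ j, ((k j : ℝ)) ^ k j := by
    apply Finset.prod_pos; intro j _
    rcases Nat.eq_zero_or_pos (k j) with h | h
    · simp [h]
    · exact pow_pos (by exact_mod_cast h) _
  have hppos : (0:ℝ) ≤ ∏ j, p j ^ k j :=
    Finset.prod_nonneg fun j _ => pow_nonneg (hp j) _
  have hB : ((m.factorial : ℝ) / ∏ j, ((k j).factorial : ℝ)) * ∏ j, p j ^ k j
      ≤ ∏ j, ((m : ℝ) * p j / (k j : ℝ)) ^ k j := by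
    rw [hA]
    have hrhs : ∏ j, ((m : ℝ) * p j / (k j : ℝ)) ^ k j
        = ((m:ℝ) ^ m * ∏ j, p j ^ k j) / ∏ j, ((k j : ℝ)) ^ k j := by
      simp_rw [div_pow, mul_pow]
      rw [Finset.prod_div_distrib, Finset.prod_mul_distrib, Finset.prod_pow_eq_pow_sum, hks]
    rw [hrhs, le_div_iff₀ hkk]
    have hN : (Nat.multinomial Finset.univ k : ℝ) * ∏ j, ((k j : ℝ)) ^ k j ≤ (m:ℝ) ^ m := by
      have := nat_multinomial_le k hks
      calc (Nat.multinomial Finset.univ k : ℝ) * ∏ j, ((k j : ℝ)) ^ k j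
          = ((Nat.multinomial Finset.univ k * ∏ j, k j ^ k j : ℕ) : ℝ) := by push_cast; ring
        _ ≤ ((m ^ m : ℕ) : ℝ) := by exact_mod_cast this
        _ = (m:ℝ) ^ m := by push_cast; ring
    calc (Nat.multinomial Finset.univ k : ℝ) * (∏ j, p j ^ k j) * ∏ j, ((k j : ℝ)) ^ k j
        = ((Nat.multinomial Finset.univ k : ℝ) * ∏ j, ((k j : ℝ)) ^ k j) * ∏ j, p j ^ k j := by
          ring
      _ ≤ (m:ℝ) ^ m * ∏ j, p j ^ k j := mul_le_mul_of_nonneg_right hN hppos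
  have hC : ∏ j, ((m : ℝ) * p j / (k j : ℝ)) ^ k j
      ≤ Real.exp (∑ j, (2 * Real.sqrt ((m:ℝ) * p j * k j) - 2 * k j)) := by
    rw [Real.exp_sum]
    apply Finset.prod_le_prod
    · intro j _
      exact pow_nonneg (div_nonneg (mul_nonneg hmR.le (hp j)) (Nat.cast_nonneg _)) _
    · intro j _; exact factor_le (k j) ((m:ℝ) * p j) (mul_nonneg hmR.le (hp j))
  -- rewrite the exponent
  set q : Fin n → ℝ := fun j => (k j : ℝ) / m with hqdef
  have hq : ∀ j, 0 ≤ q j := fun j => by positivity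
  have hqs : ∑ j, q j = 1 := by
    simp only [hqdef, ← Finset.sum_div]
    rw [show ∑ j, ((k j : ℝ)) = (m:ℝ) by exact_mod_cast congrArg Nat.cast hks]
    field_simp
  have hsqrt : ∀ j, Real.sqrt ((m:ℝ) * p j * k j) = m * Real.sqrt (p j * q j) := by
    intro j
    rw [← Real.sqrt_sq hmR.le, ← Real.sqrt_mul (by positivity)]
    congr 1
    simp only [hqdef]
    field_simp
    ring_nf; rw [Real.sqrt_sq hmR.le]
  have hksR : ∑ j, ((k j : ℝ)) = (m:ℝ) := by exact_mod_cast congrArg Nat.cast hks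
  have hexp : ∑ j, (2 * Real.sqrt ((m:ℝ) * p j * k j) - 2 * k j)
      = -(m:ℝ) * (2 - 2 * ∑ j, Real.sqrt (p j * q j)) := by
    rw [Finset.sum_sub_distrib]
    simp_rw [hsqrt]
    rw [← Finset.mul_sum, ← Finset.mul_sum, ← Finset.mul_sum, hksR]
    ring
  have hhell := hellinger_bound p q hp hq hps hqs
  have hfinal : ∑ j, (2 * Real.sqrt ((m:ℝ) * p j * k j) - 2 * k j)
      ≤ -(m : ℝ) / 4 * (∑ j, |(k j : ℝ) / m - p j|) ^ 2 := by
    rw [hexp]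
    have : (∑ j, |(k j : ℝ) / m - p j|) = ∑ j, |q j - p j| := by
      apply Finset.sum_congr rfl; intro j _; rw [hqdef]
    rw [this]
    nlinarith [hhell, hmR]
  calc ((m.factorial : ℝ) / ∏ j, ((k j).factorial : ℝ)) * ∏ j, p j ^ k j
      ≤ ∏ j, ((m : ℝ) * p j / (k j : ℝ)) ^ k j := hB
    _ ≤ Real.exp (∑ j, (2 * Real.sqrt ((m:ℝ) * p j * k j) - 2 * k j)) := hC
    _ ≤ Real.exp (-(m : ℝ) / 4 * (∑ j, |(k j : ℝ) / m - p j|) ^ 2) :=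
        Real.exp_le_exp.mpr hfinal

theorem multinomial_concentration (d : ℕ) (hd : 1 ≤ d) (δ : ℝ) (hδ : 0 < δ) :
    ∃ c > (0 : ℝ), ∃ C > (0 : ℝ), ∀ m : ℕ, 1 ≤ m → ∀ x ∈ simplex d,
      ∑ k ∈ (multiIndex d m).filter (fun k => δ < ∑ i, |(k i : ℝ) / m - x i|),
          multinomialPMF d m x k
        ≤ C * Real.exp (-c * δ ^ 2 * m) := by
  have hdR : (0:ℝ) < d := by exact_mod_cast hd
  set a : ℝ := δ ^ 2 / (8 * d) with ha
  have ha0 : 0 < a := by positivity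
  refine ⟨1/8, by norm_num, (1 + 1/a) ^ d, by positivity, ?_⟩
  intro m hm x hx
  have hmR : (0:ℝ) < m := by exact_mod_cast hm
  obtain ⟨hxi, hxs⟩ := hx
  -- pointwise bound for each k in the tail set
  have hpoint : ∀ k ∈ (multiIndex d m).filter (fun k => δ < ∑ i, |(k i : ℝ) / m - x i|),
      multinomialPMF d m x k ≤ Real.exp (-(m:ℝ) / 4 * δ ^ 2) := by
    intro k hk
    rw [Finset.mem_filter] at hk
    obtain ⟨hk1, hk2⟩ := hk
    have hsum : ∑ i, k i ≤ m := by
      rw [multiIndex, Finset.mem_filter] at hk1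
      exact hk1.2
    set k' : Fin (d+1) → ℕ := Fin.cons (m - ∑ i, k i) k with hk'
    set p' : Fin (d+1) → ℝ := Fin.cons (1 - ∑ i, x i) x with hp'
    have hp'nn : ∀ j, 0 ≤ p' j := by
      intro j
      refine Fin.cases ?_ ?_ j
      · simp only [hp', Fin.cons_zero]; linarith
      · intro i; simp only [hp', Fin.cons_succ]; exact (hxi i).1
    have hp's : ∑ j, p' j = 1 := by
      rw [hp', Fin.sum_cons]; ring
    have hk's : ∑ j, k' j = m := by
      rw [hk', Fin.sum_cons]
      exact Nat.sub_add_cancel hsum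
    have hpmf : multinomialPMF d m x k
        = ((m.factorial : ℝ) / ∏ j, ((k' j).factorial : ℝ)) * ∏ j, p' j ^ k' j := by
      rw [multinomialPMF]
      rw [show (∏ j, ((k' j).factorial : ℝ))
          = ((m - ∑ i, k i).factorial : ℝ) * ∏ i, ((k i).factorial : ℝ) by
        rw [hk', Fin.prod_univ_succ]; simp]
      rw [show (∏ j, p' j ^ k' j)
          = (1 - ∑ i, x i) ^ (m - ∑ i, k i) * ∏ i, (x i) ^ (k i) by
        rw [hk', hp', Fin.prod_univ_succ]; simp]
      ring
    have hT : δ < ∑ j, |(k' j : ℝ) / m - p' j| := by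
      rw [hk', hp', Fin.sum_univ_succ]
      simp only [Fin.cons_zero, Fin.cons_succ]
      have : (0:ℝ) ≤ |((m - ∑ i, k i : ℕ) : ℝ) / m - (1 - ∑ i, x i)| := abs_nonneg _
      linarith [hk2]
    have := pointwise_bound hm k' p' hp'nn hp's hk's
    rw [hpmf]
    refine this.trans (Real.exp_le_exp.mpr ?_)
    have hTnn : 0 ≤ ∑ j, |(k' j : ℝ) / m - p' j| :=
      Finset.sum_nonneg fun j _ => abs_nonneg _
    have : δ ^ 2 ≤ (∑ j, |(k' j : ℝ) / m - p' j|) ^ 2 := by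
      apply sq_le_sq' <;> nlinarith
    nlinarith
  -- sum over the tail set
  have hcard : (((multiIndex d m).filter
      (fun k => δ < ∑ i, |(k i : ℝ) / m - x i|)).card : ℝ) ≤ ((m+1 : ℕ) : ℝ) ^ d := by
    have h1 : ((multiIndex d m).filter (fun k => δ < ∑ i, |(k i : ℝ) / m - x i|)).card
        ≤ (Fintype.piFinset fun _ : Fin d => Finset.range (m + 1)).card :=
      Finset.card_le_card ((Finset.filter_subset _ _).trans
        (by rw [multiIndex]; exact Finset.filter_subset _ _))
    rw [Fintype.card_piFinset] at h1
    simp only [Finset.card_range, Finset.prod_const, Finset.card_univ, Fintype.card_fin] at h1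
    exact_mod_cast h1.trans_eq rfl
  have hsum : ∑ k ∈ (multiIndex d m).filter (fun k => δ < ∑ i, |(k i : ℝ) / m - x i|),
      multinomialPMF d m x k
      ≤ ((m+1:ℕ):ℝ) ^ d * Real.exp (-(m:ℝ) / 4 * δ ^ 2) := by
    calc ∑ k ∈ (multiIndex d m).filter (fun k => δ < ∑ i, |(k i : ℝ) / m - x i|),
        multinomialPMF d m x k
        ≤ ∑ _k ∈ (multiIndex d m).filter (fun k => δ < ∑ i, |(k i : ℝ) / m - x i|),
          Real.exp (-(m:ℝ) / 4 * δ ^ 2) := Finset.sum_le_sum hpoint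
      _ = (((multiIndex d m).filter (fun k => δ < ∑ i, |(k i : ℝ) / m - x i|)).card : ℝ)
          * Real.exp (-(m:ℝ) / 4 * δ ^ 2) := by rw [Finset.sum_const, nsmul_eq_mul]
      _ ≤ ((m+1:ℕ):ℝ) ^ d * Real.exp (-(m:ℝ) / 4 * δ ^ 2) :=
          mul_le_mul_of_nonneg_right hcard (Real.exp_pos _).le
  -- bound the polynomial factor
  have hpoly : ((m+1:ℕ):ℝ) ^ d ≤ (1 + 1/a) ^ d * Real.exp (δ ^ 2 / 8 * m) := by
    have h1 : ((m+1:ℕ):ℝ) ≤ (1 + 1/a) * Real.exp (a * m) := by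
      have h2 : 1 + a * m ≤ Real.exp (a * m) := by
        have := Real.add_one_le_exp (a * m)
        linarith
      have h3 : ((m+1:ℕ):ℝ) = (m:ℝ) + 1 := by push_cast; ring
      rw [h3]
      have h4 : (m:ℝ) + 1 ≤ (1 + 1/a) * (1 + a * m) := by
        have : (1 + 1/a) * (1 + a * m) = 1 + a*m + 1/a + m := by field_simp; ring
        rw [this]
        have : 0 ≤ a * m := by positivity
        have : 0 ≤ 1/a := by positivity
        linarith
      calc (m:ℝ) + 1 ≤ (1 + 1/a) * (1 + a * m) := h4
        _ ≤ (1 + 1/a) * Real.exp (a * m) := by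
            apply mul_le_mul_of_nonneg_left h2; positivity
    calc ((m+1:ℕ):ℝ) ^ d ≤ ((1 + 1/a) * Real.exp (a * m)) ^ d := by
          apply pow_le_pow_left₀ (by positivity) h1
      _ = (1 + 1/a) ^ d * Real.exp (a * m) ^ d := mul_pow _ _ _
      _ = (1 + 1/a) ^ d * Real.exp (δ ^ 2 / 8 * m) := by
          rw [← Real.exp_nat_mul]
          congr 1
          rw [ha]
          field_simp
  refine hsum.trans ?_
  calc ((m+1:ℕ):ℝ) ^ d * Real.exp (-(m:ℝ) / 4 * δ ^ 2)
      ≤ ((1 + 1/a) ^ d * Real.exp (δ ^ 2 / 8 * m)) * Real.exp (-(m:ℝ) / 4 * δ ^ 2) :=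
        mul_le_mul_of_nonneg_right hpoly (Real.exp_pos _).le
    _ = (1 + 1/a) ^ d * Real.exp (-(1/8) * δ ^ 2 * m) := by
        rw [mul_assoc, ← Real.exp_add]
        congr 2
        ring
end

section
/- Let ξ ~ Binomial(m, x) with x ∈ (0,1). Then ∑_{k=0}^m (Binomial pmf)²(k) = P(ξ = ξ') for an independent copy ξ', and m^{1/2} ∑_{k=0}^m [C(m,k) x^k (1−x)^{m−k}]² → 1/√(4π x(1−x)) as m → ∞. -/
open scoped BigOperators Classical
open Finset Real Filter MeasureTheory

noncomputable def gfun (x t : ℝ) : ℝ := 1 - 2 * (x * (1 - x)) * (1 - Real.cos t)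

lemma exp_int_integral {n : ℤ} (hn : n ≠ 0) :
    (∫ t : ℝ in (-π)..π, Complex.exp ((n : ℂ) * Complex.I * t)) = 0 := by
  have hc : (n : ℂ) * Complex.I ≠ 0 := by
    simp [Complex.ext_iff, Complex.I_ne_zero, hn]
  rw [integral_exp_mul_complex hc]
  have : Complex.exp ((n:ℂ) * Complex.I * ((-π : ℝ) : ℂ)) =
      Complex.exp ((n:ℂ) * Complex.I * ((π : ℝ) : ℂ)) := by
    rw [show ((n:ℂ) * Complex.I * ((-π : ℝ) : ℂ)) =
        (n:ℂ) * Complex.I * ((π : ℝ) : ℂ) - (n : ℂ) * (2 * π * Complex.I) by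
      push_cast; ring]
    rw [Complex.exp_sub, Complex.exp_int_mul_two_pi_mul_I, div_one]
  rw [this, sub_self, zero_div]

lemma orth (j k : ℕ) :
    (∫ t : ℝ in (-π)..π, Complex.exp ((j : ℂ) * t * Complex.I) *
      Complex.exp (-((k : ℂ) * t * Complex.I))) =
      if j = k then (2 * π : ℂ) else 0 := by
  have hcomb : ∀ t : ℝ, Complex.exp ((j : ℂ) * t * Complex.I) *
      Complex.exp (-((k : ℂ) * t * Complex.I)) =
      Complex.exp ((((j : ℤ) - (k : ℤ) : ℤ) : ℂ) * Complex.I * t) := by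
    intro t
    rw [← Complex.exp_add]
    congr 1
    push_cast
    ring
  simp only [hcomb]
  by_cases h : j = k
  · subst h
    simp only [sub_self, Int.cast_zero, zero_mul, Complex.exp_zero, if_pos rfl]
    rw [intervalIntegral.integral_const]
    push_cast
    ring_nf
    simp [two_mul]
  · rw [if_neg h]
    exact exp_int_integral (by omega)

lemma fourier_identity (x : ℝ) (m : ℕ) :
    (∫ t in (-π)..π, (gfun x t) ^ m) =
      2 * π * ∑ k ∈ range (m + 1), ((m.choose k : ℝ) * x ^ k * (1 - x) ^ (m - k)) ^ 2 := by
  set c : ℕ → ℝ := fun k => (m.choose k : ℝ) * x ^ k * (1 - x) ^ (m - k) with hc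
  -- factorization of gfun into complex product
  have hfact : ∀ t : ℝ, ((gfun x t : ℝ) : ℂ) =
      (((1 - x : ℝ) : ℂ) + (x : ℝ) * Complex.exp (t * Complex.I)) *
        (((1 - x : ℝ) : ℂ) + (x : ℝ) * Complex.exp (-(t * Complex.I))) := by
    intro t
    have e1 : Complex.exp (t * Complex.I) * Complex.exp (-(t * Complex.I)) = 1 := by
      rw [← Complex.exp_add]; simp
    have e2 : Complex.exp (t * Complex.I) + Complex.exp (-(t * Complex.I)) =
        2 * Complex.cos t := by
      have : (Complex.cos t) =
          (Complex.exp (↑t * Complex.I) + Complex.exp (-↑t * Complex.I)) / 2 := rfl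
      rw [this]; ring_nf
    calc ((gfun x t : ℝ) : ℂ)
        = (((1-x:ℝ):ℂ))^2 + ((x:ℝ):ℂ)*((1-x:ℝ):ℂ) *
            (Complex.exp (t * Complex.I) + Complex.exp (-(t * Complex.I))) +
            ((x:ℝ):ℂ)^2 * (Complex.exp (t * Complex.I) * Complex.exp (-(t * Complex.I))) := by
          rw [e1, e2, ← Complex.ofReal_cos]
          unfold gfun
          push_cast
          ring
      _ = _ := by ring
  have hbin1 : ∀ t : ℝ, (((1 - x : ℝ) : ℂ) + (x : ℝ) * Complex.exp (t * Complex.I)) ^ m =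
      ∑ j ∈ range (m + 1), ((c j : ℝ) : ℂ) * Complex.exp ((j : ℂ) * t * Complex.I) := by
    intro t
    rw [add_comm, add_pow]
    refine Finset.sum_congr rfl fun j hj => ?_
    rw [mul_pow, ← Complex.exp_nat_mul, hc]
    push_cast
    ring_nf
  have hbin2 : ∀ t : ℝ, (((1 - x : ℝ) : ℂ) + (x : ℝ) * Complex.exp (-(t * Complex.I))) ^ m =
      ∑ k ∈ range (m + 1), ((c k : ℝ) : ℂ) * Complex.exp (-((k : ℂ) * t * Complex.I)) := by
    intro t
    rw [add_comm, add_pow]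
    refine Finset.sum_congr rfl fun k hk => ?_
    rw [mul_pow, ← Complex.exp_nat_mul, hc]
    push_cast
    ring_nf
  have hexpand : ∀ t : ℝ, ((gfun x t : ℝ) : ℂ) ^ m =
      ∑ j ∈ range (m + 1), ∑ k ∈ range (m + 1),
        ((c j : ℝ) : ℂ) * ((c k : ℝ) : ℂ) *
          (Complex.exp ((j : ℂ) * t * Complex.I) * Complex.exp (-((k : ℂ) * t * Complex.I))) := by
    intro t
    rw [hfact t, mul_pow, hbin1 t, hbin2 t, Finset.sum_mul_sum]
    refine Finset.sum_congr rfl fun j _ => Finset.sum_congr rfl fun k _ => by ring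
  have hcont : ∀ j k : ℕ, Continuous (fun t : ℝ =>
      ((c j : ℝ) : ℂ) * ((c k : ℝ) : ℂ) *
        (Complex.exp ((j : ℂ) * t * Complex.I) * Complex.exp (-((k : ℂ) * t * Complex.I)))) := by
    intro j k
    fun_prop
  have hint : (∫ t in (-π)..π, ((gfun x t : ℝ) : ℂ) ^ m) =
      ((2 * π : ℝ) : ℂ) * ∑ k ∈ range (m + 1), ((c k : ℝ) : ℂ) ^ 2 := by
    rw [intervalIntegral.integral_congr (g := fun t => ∑ j ∈ range (m + 1), ∑ k ∈ range (m + 1),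
        ((c j : ℝ) : ℂ) * ((c k : ℝ) : ℂ) *
          (Complex.exp ((j : ℂ) * t * Complex.I) * Complex.exp (-((k : ℂ) * t * Complex.I))))
      (fun t _ => hexpand t)]
    rw [intervalIntegral.integral_finset_sum]
    swap
    · exact fun j _ => (Continuous.intervalIntegrable (by fun_prop) _ _)
    have : ∀ j ∈ range (m + 1),
        (∫ t in (-π)..π, ∑ k ∈ range (m + 1),
          ((c j : ℝ) : ℂ) * ((c k : ℝ) : ℂ) *
            (Complex.exp ((j : ℂ) * t * Complex.I) * Complex.exp (-((k : ℂ) * t * Complex.I))))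
        = ∑ k ∈ range (m + 1), ((c j : ℝ) : ℂ) * ((c k : ℝ) : ℂ) *
            (if j = k then (2 * π : ℂ) else 0) := by
      intro j _
      rw [intervalIntegral.integral_finset_sum
        (fun k _ => (Continuous.intervalIntegrable (hcont j k) _ _))]
      refine Finset.sum_congr rfl fun k _ => ?_
      rw [intervalIntegral.integral_const_mul, orth j k]
    rw [Finset.sum_congr rfl this]
    have : ∀ j ∈ range (m + 1),
        (∑ k ∈ range (m + 1), ((c j : ℝ) : ℂ) * ((c k : ℝ) : ℂ) *
          (if j = k then (2 * π : ℂ) else 0))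
        = ((2 * π : ℝ) : ℂ) * ((c j : ℝ) : ℂ) ^ 2 := by
      intro j hj
      rw [Finset.sum_eq_single j]
      · rw [if_pos rfl]; push_cast; ring
      · intro k _ hk; rw [if_neg (Ne.symm hk), mul_zero]
      · intro h; exact absurd hj h
    rw [Finset.sum_congr rfl this, ← Finset.mul_sum]
  have hre : (∫ t in (-π)..π, ((gfun x t : ℝ) : ℂ) ^ m) =
      (((∫ t in (-π)..π, (gfun x t) ^ m : ℝ)) : ℂ) := by
    simp_rw [← Complex.ofReal_pow]
    exact RCLike.intervalIntegral_ofReal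
  rw [hre] at hint
  have := hint
  rw [show ((2 * π : ℝ) : ℂ) * ∑ k ∈ range (m + 1), ((c k : ℝ) : ℂ) ^ 2 =
      (((2 * π * ∑ k ∈ range (m + 1), (c k) ^ 2 : ℝ)) : ℂ) by push_cast; ring] at this
  exact_mod_cast this

lemma gfun_nonneg {x : ℝ} (hx : x ∈ Set.Ioo (0:ℝ) 1) (t : ℝ) : 0 ≤ gfun x t := by
  obtain ⟨h0, h1⟩ := hx
  unfold gfun
  nlinarith [Real.neg_one_le_cos t, Real.cos_le_one t, sq_nonneg (1 - 2*x)]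

lemma gfun_le_one {x : ℝ} (hx : x ∈ Set.Ioo (0:ℝ) 1) (t : ℝ) : gfun x t ≤ 1 := by
  obtain ⟨h0, h1⟩ := hx
  unfold gfun
  nlinarith [Real.cos_le_one t, mul_pos h0 (show (0:ℝ) < 1 - x by linarith)]

lemma gfun_bound {x : ℝ} (hx : x ∈ Set.Ioo (0:ℝ) 1) {t : ℝ} (ht : |t| ≤ π) :
    gfun x t ≤ Real.exp (-(4 * (x*(1-x)) / π^2) * t^2) := by
  obtain ⟨h0, h1⟩ := hx
  have hcos := Real.cos_le_one_sub_mul_cos_sq ht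
  have hxx : 0 < x * (1 - x) := by nlinarith
  have h2 : gfun x t ≤ 1 + (-(4 * (x*(1-x)) / π^2) * t^2) := by
    unfold gfun
    have hπ := Real.pi_pos
    have : 2/π^2 * t^2 ≤ 1 - Real.cos t := by linarith
    calc 1 - 2 * (x * (1 - x)) * (1 - Real.cos t)
        ≤ 1 - 2 * (x * (1 - x)) * (2/π^2 * t^2) := by nlinarith
      _ = 1 + (-(4 * (x*(1-x)) / π^2) * t^2) := by field_simp; ring
  exact h2.trans (by linarith [Real.add_one_le_exp (-(4 * (x*(1-x)) / π^2) * t^2)])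

-- log(1+v)/v → 1
lemma log_one_add_div : Tendsto (fun v : ℝ => Real.log (1+v) / v)
    (nhdsWithin 0 {0}ᶜ) (nhds 1) := by
  have H : HasDerivAt Real.log 1 1 := by simpa using Real.hasDerivAt_log one_ne_zero
  rw [hasDerivAt_iff_tendsto_slope] at H
  have hmap : Tendsto (fun v : ℝ => 1 + v) (nhdsWithin 0 {0}ᶜ) (nhdsWithin 1 {1}ᶜ) := by
    rw [tendsto_nhdsWithin_iff]
    constructor
    · exact ((continuous_const.add continuous_id).tendsto' 0 1 (by simp)).mono_left
        nhdsWithin_le_nhds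
    · filter_upwards [self_mem_nhdsWithin] with v hv
      simpa using hv
  have := H.comp hmap
  refine this.congr ?_
  intro v
  simp [slope_def_field, Function.comp]

-- sin u / u → 1
lemma sin_div_self : Tendsto (fun u : ℝ => Real.sin u / u) (nhdsWithin 0 {0}ᶜ) (nhds 1) := by
  have H : HasDerivAt Real.sin 1 0 := by simpa using Real.hasDerivAt_sin 0
  rw [hasDerivAt_iff_tendsto_slope] at H
  refine H.congr ?_
  intro u
  simp [slope_def_field]

lemma one_sub_cos_div_sq : Tendsto (fun t : ℝ => (1 - Real.cos t) / t^2)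
    (nhdsWithin 0 {0}ᶜ) (nhds (1/2)) := by
  have hmap : Tendsto (fun t : ℝ => t/2) (nhdsWithin 0 {0}ᶜ) (nhdsWithin 0 {0}ᶜ) := by
    rw [tendsto_nhdsWithin_iff]
    constructor
    · exact (continuous_id.div_const 2).tendsto' 0 0 (by simp) |>.mono_left nhdsWithin_le_nhds
    · filter_upwards [self_mem_nhdsWithin] with t ht
      simp only [Set.mem_compl_iff, Set.mem_singleton_iff] at ht ⊢
      intro h; exact ht (by linarith)
  have hq := sin_div_self.comp hmap
  have hsq : Tendsto (fun t : ℝ => (Real.sin (t/2) / (t/2))^2 / 2)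
      (nhdsWithin 0 {0}ᶜ) (nhds (1/2)) := by
    have := (hq.pow 2).div_const 2
    simpa using this
  refine hsq.congr' ?_
  filter_upwards [self_mem_nhdsWithin] with t ht
  simp only [Set.mem_compl_iff, Set.mem_singleton_iff] at ht
  have h1cos : 1 - Real.cos t = 2 * Real.sin (t/2)^2 := by
    have h1 := Real.cos_sq (t/2)
    have h2 := Real.sin_sq (t/2)
    have : 2 * (t/2) = t := by ring
    rw [this] at h1
    nlinarith
  rw [h1cos]
  field_simp

lemma log_gfun_div_sq {x : ℝ} (hx : x ∈ Set.Ioo (0:ℝ) 1) :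
    Tendsto (fun t : ℝ => Real.log (gfun x t) / t^2)
      (nhdsWithin 0 {0}ᶜ) (nhds (-(x*(1-x)))) := by
  obtain ⟨h0, h1⟩ := hx
  have hK : 0 < x * (1-x) := by nlinarith
  set K := x * (1-x) with hKdef
  set u : ℝ → ℝ := fun t => -(2*K) * (1 - Real.cos t) with hu
  have humap : Tendsto u (nhdsWithin 0 {0}ᶜ) (nhdsWithin 0 {0}ᶜ) := by
    rw [tendsto_nhdsWithin_iff]
    constructor
    · have : Continuous u := by fun_prop
      exact (this.tendsto' 0 0 (by simp [hu])).mono_left nhdsWithin_le_nhds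
    · have hmem : Set.Icc (-π) π ∈ nhds (0:ℝ) :=
        Icc_mem_nhds (by linarith [Real.pi_pos]) Real.pi_pos
      filter_upwards [self_mem_nhdsWithin, eventually_nhdsWithin_of_eventually_nhds
        (eventually_of_mem hmem (fun t ht => ht))] with t ht habs
      simp only [Set.mem_compl_iff, Set.mem_singleton_iff] at ht ⊢
      have : |t| ≤ π := abs_le.2 ⟨habs.1, habs.2⟩
      have hcos := Real.cos_le_one_sub_mul_cos_sq this
      have ht2 : 0 < t^2 := by positivity
      have hπ := Real.pi_pos
      have : 1 - Real.cos t > 0 := by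
        have : 2/π^2 * t^2 > 0 := by positivity
        linarith
      simp only [hu]
      intro h
      nlinarith
  have hcomp := log_one_add_div.comp humap
  have hratio : Tendsto (fun t : ℝ => u t / t^2) (nhdsWithin 0 {0}ᶜ) (nhds (-K)) := by
    have := one_sub_cos_div_sq.const_mul (-(2*K))
    have h2 : -(2*K) * (1/2) = -K := by ring
    rw [h2] at this
    refine this.congr (fun t => ?_)
    simp only [hu]
    ring
  have := hcomp.mul hratio
  rw [one_mul] at this
  refine this.congr' ?_
  filter_upwards [humap.eventually self_mem_nhdsWithin, self_mem_nhdsWithin] with t hut ht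
  simp only [Set.mem_compl_iff, Set.mem_singleton_iff] at hut ht
  have hgt : gfun x t = 1 + u t := by simp only [hu]; unfold gfun; ring
  simp only [Function.comp]
  rw [← hgt]
  have : Real.log (gfun x t) / u t * (u t / t^2) = Real.log (gfun x t) / t^2 := by
    field_simp
  rw [hgt] at this ⊢
  rw [this]

lemma pointwise_pow {x : ℝ} (hx : x ∈ Set.Ioo (0:ℝ) 1) (s : ℝ) :
    Tendsto (fun m : ℕ => (gfun x (s / Real.sqrt m)) ^ m) atTop
      (nhds (Real.exp (-(x*(1-x)) * s^2))) := by
  rcases eq_or_ne s 0 with rfl | hs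
  · simp only [zero_div, mul_zero]
    have : gfun x 0 = 1 := by unfold gfun; simp
    simp [this, ne_eq, mul_zero, zero_pow]
  · have hsqrt : Tendsto (fun m : ℕ => Real.sqrt m) atTop atTop := by
      apply Filter.tendsto_atTop_atTop.2
      intro b
      refine ⟨⌈b*b⌉₊, fun n hn => ?_⟩
      have hbb : (b*b : ℝ) ≤ n := le_trans (Nat.le_ceil _) (by exact_mod_cast hn)
      calc b ≤ |b| := le_abs_self b
        _ = Real.sqrt (b^2) := (Real.sqrt_sq_eq_abs b).symm
        _ = Real.sqrt (b*b) := by rw [sq]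
        _ ≤ Real.sqrt n := Real.sqrt_le_sqrt hbb
    -- t_m := s / sqrt m tends to 0 within punctured
    have htm : Tendsto (fun m : ℕ => s / Real.sqrt m) atTop (nhdsWithin 0 {0}ᶜ) := by
      rw [tendsto_nhdsWithin_iff]
      constructor
      · exact Tendsto.div_atTop tendsto_const_nhds hsqrt
      · filter_upwards [eventually_ge_atTop 1] with m hm
        have hmpos : (0:ℝ) < Real.sqrt m := Real.sqrt_pos.2 (by exact_mod_cast hm)
        simp only [Set.mem_compl_iff, Set.mem_singleton_iff]
        exact div_ne_zero hs hmpos.ne'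
    have hlog := (log_gfun_div_sq hx).comp htm
    -- multiply by s^2
    have hmul : Tendsto (fun m : ℕ => (m : ℝ) * Real.log (gfun x (s / Real.sqrt m)))
        atTop (nhds (-(x*(1-x)) * s^2)) := by
      have h2 := hlog.const_mul (s^2)
      have heq : s^2 * -(x*(1-x)) = -(x*(1-x)) * s^2 := by ring
      rw [heq] at h2
      refine h2.congr' ?_
      filter_upwards [eventually_ge_atTop 1] with m hm
      have hmpos : (0:ℝ) < (m:ℝ) := by exact_mod_cast hm
      have hsq : (s / Real.sqrt m)^2 = s^2 / m := by
        rw [div_pow, Real.sq_sqrt hmpos.le]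
      simp only [Function.comp]
      rw [hsq]
      field_simp
    -- g(t_m) is eventually positive
    have hgpos : ∀ᶠ m : ℕ in atTop, 0 < gfun x (s / Real.sqrt m) := by
      have hcont : Continuous (gfun x) := by unfold gfun; fun_prop
      have : Tendsto (fun m : ℕ => gfun x (s / Real.sqrt m)) atTop (nhds 1) := by
        have h0 : gfun x 0 = 1 := by unfold gfun; simp
        have := (hcont.tendsto' 0 1 h0).comp (htm.mono_right nhdsWithin_le_nhds)
        exact this
      filter_upwards [this.eventually (eventually_gt_nhds (show (1:ℝ)/2 < 1 by norm_num))]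
        with m hm
      linarith
    have hfinal := (Real.continuous_exp.tendsto _).comp hmul
    refine hfinal.congr' ?_
    filter_upwards [hgpos] with m hm
    simp only [Function.comp]
    rw [Real.exp_nat_mul, Real.exp_log hm]

lemma dct {x : ℝ} (hx : x ∈ Set.Ioo (0:ℝ) 1) :
    Tendsto (fun m : ℕ => ∫ s : ℝ,
        (Set.Ioc (-(Real.sqrt m * π)) (Real.sqrt m * π)).indicator
          (fun s => (gfun x (s / Real.sqrt m)) ^ m) s)
      atTop (nhds (Real.sqrt (π / (x * (1-x))))) := by
  obtain ⟨h0, h1⟩ := hx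
  have hK : 0 < x * (1-x) := by nlinarith
  have hπ := Real.pi_pos
  have hKb : 0 < 4 * (x*(1-x)) / π^2 := by positivity
  have hgauss : (∫ s : ℝ, Real.exp (-(x*(1-x)) * s^2)) = Real.sqrt (π / (x*(1-x))) :=
    integral_gaussian (x*(1-x))
  rw [← hgauss]
  apply tendsto_integral_of_dominated_convergence
    (fun s => Real.exp (-(4 * (x*(1-x)) / π^2) * s^2))
  · intro m
    apply AEStronglyMeasurable.indicator _ measurableSet_Ioc
    apply Continuous.aestronglyMeasurable
    unfold gfun; fun_prop
  · exact integrable_exp_neg_mul_sq hKb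
  · intro m
    filter_upwards with s
    by_cases hs : s ∈ Set.Ioc (-(Real.sqrt m * π)) (Real.sqrt m * π)
    · rw [Set.indicator_of_mem hs]
      have hg0 := gfun_nonneg ⟨h0, h1⟩ (s / Real.sqrt m)
      rw [Real.norm_of_nonneg (pow_nonneg hg0 m)]
      -- m must be ≥ 1
      rcases Nat.eq_zero_or_pos m with rfl | hm
      · exfalso
        obtain ⟨hs1, hs2⟩ := hs
        simp only [Nat.cast_zero, Real.sqrt_zero, zero_mul, neg_zero] at hs1 hs2
        linarith
      have hmR : (0:ℝ) < m := by exact_mod_cast hm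
      have hr : (0:ℝ) < Real.sqrt m := Real.sqrt_pos.2 hmR
      have habs : |s / Real.sqrt m| ≤ π := by
        rw [abs_div, abs_of_pos hr, div_le_iff₀ hr]
        obtain ⟨hs1, hs2⟩ := hs
        rw [abs_le]
        constructor <;> nlinarith
      have hb := gfun_bound ⟨h0, h1⟩ habs
      calc gfun x (s / Real.sqrt m) ^ m
          ≤ (Real.exp (-(4 * (x*(1-x)) / π^2) * (s / Real.sqrt m)^2)) ^ m :=
            pow_le_pow_left₀ hg0 hb m
        _ = Real.exp (-(4 * (x*(1-x)) / π^2) * s^2) := by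
            rw [← Real.exp_nat_mul]
            congr 1
            rw [div_pow, Real.sq_sqrt hmR.le]
            field_simp
    · rw [Set.indicator_of_notMem hs]
      simp [Real.exp_nonneg]
  · filter_upwards with s
    have hmem : ∀ᶠ m : ℕ in atTop,
        s ∈ Set.Ioc (-(Real.sqrt m * π)) (Real.sqrt m * π) := by
      have hsqrt : Tendsto (fun m : ℕ => Real.sqrt m * π) atTop atTop := by
        apply Filter.Tendsto.atTop_mul_const hπ
        apply Filter.tendsto_atTop_atTop.2
        intro b
        refine ⟨⌈b*b⌉₊, fun n hn => ?_⟩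
        have hbb : (b*b : ℝ) ≤ n := le_trans (Nat.le_ceil _) (by exact_mod_cast hn)
        calc b ≤ |b| := le_abs_self b
          _ = Real.sqrt (b^2) := (Real.sqrt_sq_eq_abs b).symm
          _ = Real.sqrt (b*b) := by rw [sq]
          _ ≤ Real.sqrt n := Real.sqrt_le_sqrt hbb
      filter_upwards [hsqrt.eventually_ge_atTop (|s| + 1)] with m hm
      have := le_abs_self s
      have := neg_abs_le s
      constructor <;> [linarith; linarith]
    have := pointwise_pow ⟨h0, h1⟩ s
    refine this.congr' ?_
    filter_upwards [hmem] with m hm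
    rw [Set.indicator_of_mem hm]

theorem binomial_squared_sum_asymptotics (x : ℝ) (hx : x ∈ Set.Ioo (0 : ℝ) 1) :
    (∀ m : ℕ,
      (∑ j ∈ Finset.range (m + 1), ∑ k ∈ Finset.range (m + 1),
          (if j = k then ((m.choose j : ℝ) * x ^ j * (1 - x) ^ (m - j)) *
              ((m.choose k : ℝ) * x ^ k * (1 - x) ^ (m - k)) else 0))
        = ∑ k ∈ Finset.range (m + 1),
            ((m.choose k : ℝ) * x ^ k * (1 - x) ^ (m - k)) ^ 2) ∧
    Filter.Tendsto
      (fun m : ℕ => Real.sqrt m *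
        ∑ k ∈ Finset.range (m + 1), ((m.choose k : ℝ) * x ^ k * (1 - x) ^ (m - k)) ^ 2)
      Filter.atTop
      (nhds (1 / Real.sqrt (4 * Real.pi * x * (1 - x)))) := by
  obtain ⟨h0, h1⟩ := hx
  have hK : 0 < x * (1-x) := by nlinarith
  have hπ := Real.pi_pos
  constructor
  · intro m
    refine Finset.sum_congr rfl fun j hj => ?_
    rw [Finset.sum_ite_eq (Finset.range (m+1)) j
      (fun k => ((m.choose j : ℝ) * x ^ j * (1 - x) ^ (m - j)) *
        ((m.choose k : ℝ) * x ^ k * (1 - x) ^ (m - k)))]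
    rw [if_pos hj, sq]
  · -- main limit
    set S : ℕ → ℝ := fun m =>
      ∑ k ∈ Finset.range (m + 1), ((m.choose k : ℝ) * x ^ k * (1 - x) ^ (m - k)) ^ 2 with hS
    have hId : ∀ m : ℕ, 1 ≤ m → Real.sqrt m * S m =
        (2 * π)⁻¹ * ∫ s : ℝ,
          (Set.Ioc (-(Real.sqrt m * π)) (Real.sqrt m * π)).indicator
            (fun s => (gfun x (s / Real.sqrt m)) ^ m) s := by
      intro m hm
      have hmR : (0:ℝ) < m := by exact_mod_cast hm
      have hr : (0:ℝ) < Real.sqrt m := Real.sqrt_pos.2 hmR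
      -- substitution
      have hsub : (∫ s in (-(Real.sqrt m * π))..(Real.sqrt m * π),
          (gfun x (s / Real.sqrt m)) ^ m) = Real.sqrt m * ∫ t in (-π)..π, (gfun x t) ^ m := by
        rw [intervalIntegral.integral_comp_div (fun t => (gfun x t) ^ m) hr.ne']
        rw [smul_eq_mul]
        have e2 : Real.sqrt m * π / Real.sqrt m = π := by
          rw [mul_comm, mul_div_assoc, div_self hr.ne', mul_one]
        have e1 : -(Real.sqrt m * π) / Real.sqrt m = -π := by
          rw [neg_div, e2]
        rw [e1, e2]
      have hind : (∫ s in (-(Real.sqrt m * π))..(Real.sqrt m * π),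
          (gfun x (s / Real.sqrt m)) ^ m) = ∫ s : ℝ,
            (Set.Ioc (-(Real.sqrt m * π)) (Real.sqrt m * π)).indicator
              (fun s => (gfun x (s / Real.sqrt m)) ^ m) s := by
        rw [intervalIntegral.integral_of_le (by nlinarith), integral_indicator measurableSet_Ioc]
      rw [← hind, hsub, fourier_identity x m]
      rw [hS]
      field_simp
    have hlim := (dct ⟨h0, h1⟩).const_mul ((2 * π)⁻¹)
    have hfin : Tendsto (fun m : ℕ => Real.sqrt m * S m) atTop
        (nhds ((2 * π)⁻¹ * Real.sqrt (π / (x * (1-x))))) := by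
      refine hlim.congr' ?_
      filter_upwards [eventually_ge_atTop 1] with m hm
      exact (hId m hm).symm
    have hconst : (2 * π)⁻¹ * Real.sqrt (π / (x * (1-x))) =
        1 / Real.sqrt (4 * π * x * (1 - x)) := by
      have h4 : Real.sqrt (4 * π * x * (1-x)) =
          2 * Real.sqrt π * Real.sqrt (x * (1-x)) := by
        rw [show 4 * π * x * (1-x) = (2 * Real.sqrt π * Real.sqrt (x*(1-x)))^2 by
          rw [mul_pow, mul_pow, Real.sq_sqrt hπ.le, Real.sq_sqrt hK.le]; ring]
        exact Real.sqrt_sq (by positivity)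
      have hdiv : Real.sqrt (π / (x * (1-x))) = Real.sqrt π / Real.sqrt (x * (1-x)) :=
        Real.sqrt_div hπ.le _
      rw [h4, hdiv]
      have hsπ : (0:ℝ) < Real.sqrt π := Real.sqrt_pos.2 hπ
      have hsK : (0:ℝ) < Real.sqrt (x * (1-x)) := Real.sqrt_pos.2 hK
      have hππ : Real.sqrt π * Real.sqrt π = π := Real.mul_self_sqrt hπ.le
      rw [eq_div_iff (by positivity)]
      have hstep : (2*π)⁻¹ * (Real.sqrt π / Real.sqrt (x*(1-x))) *
          (2 * Real.sqrt π * Real.sqrt (x*(1-x))) =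
          (Real.sqrt π * Real.sqrt π) * π⁻¹ * (Real.sqrt (x*(1-x)) / Real.sqrt (x*(1-x))) := by
        ring
      rw [hstep, hππ, div_self hsK.ne', mul_one, mul_inv_cancel₀ hπ.ne']
    rw [← hconst]
    exact hfin
end

section
/- Fix λ ≥ 0. Let x_m = λ/m. Then ∑_{k=0}^{m} [C(m,k) x_m^k (1−x_m)^{m−k}]² → e^{−2λ} I₀(2λ) as m → ∞. -/
open scoped BigOperators Classical
open Finset Real Filter MeasureTheory

open Topology in
lemma cast_descFact_aux (m k : ℕ) (h : k ≤ m) :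
    (m.descFactorial k : ℝ) = ∏ i ∈ range k, ((m:ℝ) - i) := by
  rw [Nat.descFactorial_eq_prod_range, Nat.cast_prod]
  exact Finset.prod_congr rfl fun i hi => by
    rw [Nat.cast_sub ((mem_range.mp hi).le.trans h)]

open Topology in
lemma pointwise_tendsto_aux (l : ℝ) (k : ℕ) :
    Tendsto (fun m : ℕ => (m.choose k : ℝ) * (l / m) ^ k * (1 - l / m) ^ (m - k))
      atTop (𝓝 (Real.exp (-l) * (l ^ k / (k.factorial : ℝ)))) := by
  have hone : Tendsto (fun m : ℕ => 1 - l / (m:ℝ)) atTop (𝓝 1) := by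
    have := (tendsto_const_nhds (x := l)).div_atTop (tendsto_natCast_atTop_atTop (R := ℝ))
    simpa using (tendsto_const_nhds (x := (1:ℝ))).sub this
  have hprod : Tendsto (fun m : ℕ => ∏ i ∈ range k, (((m:ℝ) - i) / m)) atTop (𝓝 1) := by
    have : Tendsto (fun m : ℕ => ∏ i ∈ range k, (1 - (i:ℝ) / m)) atTop
        (𝓝 (∏ i ∈ range k, (1:ℝ))) := by
      refine tendsto_finset_prod _ fun i _ => ?_
      have := (tendsto_const_nhds (x := (i:ℝ))).div_atTop (tendsto_natCast_atTop_atTop (R := ℝ))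
      simpa using (tendsto_const_nhds (x := (1:ℝ))).sub this
    simp only [Finset.prod_const_one] at this
    refine this.congr' ?_
    filter_upwards [eventually_gt_atTop 0] with m hm
    refine Finset.prod_congr rfl fun i _ => ?_
    have hm' : (m:ℝ) ≠ 0 := Nat.cast_ne_zero.mpr hm.ne'
    field_simp
  have hB : Tendsto (fun m : ℕ => (1 - l / (m:ℝ)) ^ m / (1 - l / m) ^ k) atTop
      (𝓝 (Real.exp (-l))) := by
    have hnum : Tendsto (fun m : ℕ => (1 - l / (m:ℝ)) ^ m) atTop (𝓝 (Real.exp (-l))) := by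
      have := Real.tendsto_one_add_div_pow_exp (-l)
      refine this.congr fun m => ?_
      ring_nf
    have hden : Tendsto (fun m : ℕ => (1 - l / (m:ℝ)) ^ k) atTop (𝓝 1) := by
      simpa using hone.pow k
    simpa [Pi.div_def] using hnum.div hden one_ne_zero
  have main : Tendsto (fun m : ℕ =>
      ((∏ i ∈ range k, (((m:ℝ) - i) / m)) * (l ^ k / (k.factorial : ℝ))) *
      ((1 - l / (m:ℝ)) ^ m / (1 - l / m) ^ k)) atTop
      (𝓝 (Real.exp (-l) * (l ^ k / (k.factorial : ℝ)))) := by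
    have := (hprod.mul (tendsto_const_nhds (x := l ^ k / (k.factorial : ℝ)))).mul hB
    simpa [mul_comm] using this
  refine main.congr' ?_
  filter_upwards [eventually_gt_atTop k, eventually_gt_atTop ⌈l⌉₊] with m hmk hml
  have hm0 : (0:ℝ) < m := Nat.cast_pos.mpr (lt_of_le_of_lt (Nat.zero_le _) hml)
  have hlm : l / m < 1 := by
    rw [div_lt_one hm0]
    exact lt_of_le_of_lt (Nat.le_ceil l) (by exact_mod_cast hml)
  have hne : (1 : ℝ) - l / m ≠ 0 := by linarith
  have hchoose : (m.choose k : ℝ) = (∏ i ∈ range k, ((m:ℝ) - i)) / (k.factorial : ℝ) := by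
    have h1 := Nat.descFactorial_eq_factorial_mul_choose m k
    have h2 : (m.descFactorial k : ℝ) = (k.factorial : ℝ) * m.choose k := by exact_mod_cast h1
    rw [cast_descFact_aux m k hmk.le] at h2
    field_simp [Nat.factorial_ne_zero] at h2 ⊢
    linarith [h2]
  have hpow : (1 - l / (m:ℝ)) ^ (m - k) = (1 - l / m) ^ m / (1 - l / m) ^ k :=
    pow_sub₀ _ hne hmk.le
  rw [hchoose, hpow]
  have hmne : (m:ℝ) ≠ 0 := hm0.ne'
  rw [div_pow, Finset.prod_div_distrib, Finset.prod_const, Finset.card_range]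
  field_simp

theorem binomial_squared_sum_boundary (l : ℝ) (hl : 0 ≤ l) :
    Filter.Tendsto
      (fun m : ℕ => ∑ k ∈ Finset.range (m + 1),
        ((m.choose k : ℝ) * (l / m) ^ k * (1 - l / m) ^ (m - k)) ^ 2)
      Filter.atTop
      (nhds (Real.exp (-2 * l) * ∑' k : ℕ, l ^ (2 * k) / ((k.factorial : ℝ)) ^ 2)) := by
  set f : ℕ → ℕ → ℝ := fun m k =>
    ((m.choose k : ℝ) * (l / m) ^ k * (1 - l / m) ^ (m - k)) ^ 2 with hf
  set g : ℕ → ℝ := fun k => Real.exp (-2 * l) * (l ^ (2 * k) / ((k.factorial : ℝ)) ^ 2) with hg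
  have hfac1 : ∀ k : ℕ, (1:ℝ) ≤ (k.factorial : ℝ) := fun k => by
    exact_mod_cast Nat.one_le_iff_ne_zero.mpr k.factorial_ne_zero
  have hbound_sum : Summable (fun k : ℕ => (l ^ k / (k.factorial : ℝ)) ^ 2) := by
    refine Summable.of_nonneg_of_le (fun k => by positivity) (fun k => ?_)
      (Real.summable_pow_div_factorial (l ^ 2))
    rw [div_pow, ← pow_mul, mul_comm k 2, pow_mul]
    refine div_le_div_of_nonneg_left (by positivity) (by positivity) ?_
    calc (k.factorial : ℝ) = k.factorial * 1 := by ring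
    _ ≤ (k.factorial : ℝ) * k.factorial := by
        exact mul_le_mul_of_nonneg_left (hfac1 k) (by positivity)
    _ = (k.factorial : ℝ) ^ 2 := by ring
  have key : Tendsto (fun m : ℕ => ∑' k : ℕ, f m k) atTop (nhds (∑' k : ℕ, g k)) := by
    refine tendsto_tsum_of_dominated_convergence hbound_sum (fun k => ?_) ?_
    · have := (pointwise_tendsto_aux l k).pow 2
      convert this using 2
      rw [hg]
      simp only [mul_pow, div_pow, ← pow_mul, mul_comm k 2]
      rw [← Real.exp_nat_mul]
      norm_num
    · filter_upwards [eventually_ge_atTop ⌈l⌉₊] with m hm k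
      have hlm1 : l / m ≤ 1 := by
        rcases Nat.eq_zero_or_pos m with h0 | h0
        · simp [h0]
        · rw [div_le_one (by exact_mod_cast h0)]
          exact (Nat.le_ceil l).trans (by exact_mod_cast hm)
      have hlm0 : 0 ≤ l / m := div_nonneg hl (Nat.cast_nonneg m)
      have hA0 : 0 ≤ (m.choose k : ℝ) * (l / m) ^ k * (1 - l / m) ^ (m - k) := by
        have : (0:ℝ) ≤ 1 - l / m := by linarith
        positivity
      have hA : (m.choose k : ℝ) * (l / m) ^ k * (1 - l / m) ^ (m - k) ≤ l ^ k / k.factorial := by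
        have h1 : (1 - l / m) ^ (m - k) ≤ 1 :=
          pow_le_one₀ (by linarith) (by linarith)
        have h2 : (m.choose k : ℝ) * (l / m) ^ k ≤ l ^ k / k.factorial := by
          calc (m.choose k : ℝ) * (l / m) ^ k
              ≤ ((m:ℝ) ^ k / k.factorial) * (l / m) ^ k := by
                exact mul_le_mul_of_nonneg_right (Nat.choose_le_pow_div k m)
                  (by positivity)
            _ = ((m:ℝ) * (l / m)) ^ k / k.factorial := by
                rw [mul_pow]; ring
            _ ≤ l ^ k / k.factorial := by
                refine div_le_div_of_nonneg_right (pow_le_pow_left₀ ?_ ?_ k) ?_ |>.trans_eq rfl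
                · positivity
                · rcases Nat.eq_zero_or_pos m with h0 | h0
                  · simp [h0, hl]
                  · rw [mul_div_cancel₀]
                    exact Nat.cast_ne_zero.mpr h0.ne'
                · exact (lt_of_lt_of_le one_pos (hfac1 k)).le
        calc (m.choose k : ℝ) * (l / m) ^ k * (1 - l / m) ^ (m - k)
            ≤ (m.choose k : ℝ) * (l / m) ^ k * 1 := by
              exact mul_le_mul_of_nonneg_left h1 (by positivity)
          _ = (m.choose k : ℝ) * (l / m) ^ k := by ring
          _ ≤ l ^ k / k.factorial := h2
      rw [hf]
      simp only [Real.norm_eq_abs, abs_pow, sq_abs]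
      exact pow_le_pow_left₀ hA0 hA 2
  have hsum_eq : ∀ m : ℕ, (∑' k : ℕ, f m k) = ∑ k ∈ Finset.range (m + 1), f m k := by
    intro m
    refine tsum_eq_sum fun k hk => ?_
    have hk' : m < k := by simpa using Finset.mem_range.not.mp hk
    rw [hf]
    simp [Nat.choose_eq_zero_of_lt hk']
  have htsum_g : (∑' k : ℕ, g k) =
      Real.exp (-2 * l) * ∑' k : ℕ, l ^ (2 * k) / ((k.factorial : ℝ)) ^ 2 := tsum_mul_left
  rw [← htsum_g]
  exact key.congr fun m => hsum_eq m
end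

section
/- Fix λ > 0 and let x_m = λ/m. With B_k = C(m,k) x_m^k (1−x_m)^{m−k} the Binomial(m, x_m) probabilities, m ∑_{j,k=0}^m (min(j,k)/m − x_m) B_j B_k → −λ e^{−2λ} (I₀(2λ) + I₁(2λ)) as m → ∞. -/
open scoped BigOperators Classical
open Finset Real Filter MeasureTheory

section BinomAux

lemma sumB (x : ℝ) (m : ℕ) :
    ∑ k ∈ range (m + 1), (m.choose k : ℝ) * x ^ k * (1 - x) ^ (m - k) = 1 := by
  have h := add_pow x (1 - x) m
  simp only [add_sub_cancel, one_pow] at h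
  calc ∑ k ∈ range (m + 1), (m.choose k : ℝ) * x ^ k * (1 - x) ^ (m - k)
      = ∑ k ∈ range (m + 1), x ^ k * (1 - x) ^ (m - k) * (m.choose k : ℝ) :=
        Finset.sum_congr rfl fun k _ => by ring
    _ = 1 := h.symm

lemma sumKB (x : ℝ) (m : ℕ) :
    ∑ k ∈ range (m + 1), (k : ℝ) * ((m.choose k : ℝ) * x ^ k * (1 - x) ^ (m - k))
      = m * x := by
  cases m with
  | zero => simp
  | succ n =>
    rw [Finset.sum_range_succ' _ (n + 1)]
    simp only [Nat.succ_sub_succ, Nat.cast_zero, zero_mul, add_zero]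
    have : ∀ i ∈ range (n + 1),
        ((i + 1 : ℕ) : ℝ) * (((n+1).choose (i+1) : ℝ) * x ^ (i+1) * (1 - x) ^ (n - i))
        = ((n : ℝ) + 1) * x * ((n.choose i : ℝ) * x ^ i * (1 - x) ^ (n - i)) := by
      intro i _
      have h : ((i : ℕ) + 1) * (n+1).choose (i+1) = (n + 1) * n.choose i := by
        rw [mul_comm]
        exact (Nat.add_one_mul_choose_eq n i).symm
      have h' : (((i : ℕ) + 1 : ℕ) : ℝ) * ((n+1).choose (i+1) : ℝ)
          = ((n : ℝ) + 1) * (n.choose i : ℝ) := by exact_mod_cast congrArg (Nat.cast (R := ℝ)) h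
      calc (((i : ℕ) + 1 : ℕ) : ℝ) * (((n+1).choose (i+1) : ℝ) * x ^ (i+1) * (1 - x) ^ (n - i))
          = ((((i : ℕ) + 1 : ℕ) : ℝ) * ((n+1).choose (i+1) : ℝ)) * x ^ (i+1) * (1 - x) ^ (n - i) := by
            ring
        _ = (((n : ℝ) + 1) * (n.choose i : ℝ)) * x ^ (i+1) * (1 - x) ^ (n - i) := by rw [h']
        _ = _ := by ring
    rw [Finset.sum_congr rfl this, ← Finset.mul_sum, sumB x n]
    push_cast
    ring

lemma reduce (l : ℝ) {m : ℕ} (hm : 1 ≤ m) :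
    (m : ℝ) * ∑ j ∈ range (m + 1), ∑ k ∈ range (m + 1),
        ((min j k : ℝ) / m - l / m) *
          ((m.choose j : ℝ) * (l / m) ^ j * (1 - l / m) ^ (m - j)) *
          ((m.choose k : ℝ) * (l / m) ^ k * (1 - l / m) ^ (m - k))
      = -(1/2) * ∑ j ∈ range (m + 1), ∑ k ∈ range (m + 1),
          |(j : ℝ) - (k : ℝ)| *
            ((m.choose j : ℝ) * (l / m) ^ j * (1 - l / m) ^ (m - j)) *
            ((m.choose k : ℝ) * (l / m) ^ k * (1 - l / m) ^ (m - k)) := by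
  have hm0 : (m : ℝ) ≠ 0 := Nat.cast_ne_zero.mpr (by omega)
  set B : ℕ → ℝ := fun k => (m.choose k : ℝ) * (l / m) ^ k * (1 - l / m) ^ (m - k) with hB
  have hBsum : ∑ k ∈ range (m + 1), B k = 1 := sumB (l / m) m
  have hKB : ∑ k ∈ range (m + 1), (k : ℝ) * B k = l := by
    rw [hB]; rw [sumKB (l / m) m, mul_div_cancel₀ _ hm0]
  have key : ∀ j k : ℕ,
      (m : ℝ) * (((min j k : ℝ) / m - l / m) * B j * B k)
        = (j : ℝ) / 2 * B j * B k + B j * ((k : ℝ) / 2 * B k)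
          - |(j : ℝ) - (k : ℝ)| / 2 * B j * B k - l * B j * B k := by
    intro j k
    have hmin : (min (j : ℝ) (k : ℝ)) = ((j : ℝ) + k - |(j : ℝ) - k|) / 2 := by
      rcases le_total (j : ℝ) k with h | h
      · rw [min_eq_left h, abs_of_nonpos (by linarith)]; ring
      · rw [min_eq_right h, abs_of_nonneg (by linarith)]; ring
    rw [hmin]
    field_simp
  have lhs_eq : (m : ℝ) * ∑ j ∈ range (m + 1), ∑ k ∈ range (m + 1),
      ((min j k : ℝ) / m - l / m) * B j * B k
      = ∑ j ∈ range (m + 1), ∑ k ∈ range (m + 1),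
        ((j : ℝ) / 2 * B j * B k + B j * ((k : ℝ) / 2 * B k)
          - |(j : ℝ) - (k : ℝ)| / 2 * B j * B k - l * B j * B k) := by
    rw [Finset.mul_sum]
    refine Finset.sum_congr rfl fun j _ => ?_
    rw [Finset.mul_sum]
    exact Finset.sum_congr rfl fun k _ => key j k
  rw [lhs_eq]
  simp only [Finset.sum_add_distrib, Finset.sum_sub_distrib]
  have e1 : ∑ j ∈ range (m+1), ∑ k ∈ range (m+1), (j : ℝ) / 2 * B j * B k = l / 2 := by
    have h1 : ∀ j ∈ range (m+1), ∑ k ∈ range (m+1), (j : ℝ) / 2 * B j * B k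
        = (j : ℝ) / 2 * B j := fun j _ => by rw [← Finset.mul_sum, hBsum, mul_one]
    rw [Finset.sum_congr rfl h1]
    have h2 : ∑ j ∈ range (m+1), (j : ℝ) / 2 * B j
        = (∑ j ∈ range (m+1), (j : ℝ) * B j) / 2 := by
      rw [Finset.sum_div]; exact Finset.sum_congr rfl fun _ _ => by ring
    rw [h2, hKB]
  have e2 : ∑ j ∈ range (m+1), ∑ k ∈ range (m+1), B j * ((k : ℝ) / 2 * B k) = l / 2 := by
    have hk : ∑ k ∈ range (m+1), (k : ℝ) / 2 * B k = l / 2 := by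
      have h2 : ∑ k ∈ range (m+1), (k : ℝ) / 2 * B k
          = (∑ k ∈ range (m+1), (k : ℝ) * B k) / 2 := by
        rw [Finset.sum_div]; exact Finset.sum_congr rfl fun _ _ => by ring
      rw [h2, hKB]
    have h1 : ∀ j ∈ range (m+1), ∑ k ∈ range (m+1), B j * ((k : ℝ) / 2 * B k)
        = B j * (l / 2) := fun j _ => by rw [← Finset.mul_sum, hk]
    rw [Finset.sum_congr rfl h1, ← Finset.sum_mul, hBsum, one_mul]
  have e4 : ∑ j ∈ range (m+1), ∑ k ∈ range (m+1), l * B j * B k = l := by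
    have h1 : ∀ j ∈ range (m+1), ∑ k ∈ range (m+1), l * B j * B k
        = l * B j := fun j _ => by rw [← Finset.mul_sum, hBsum, mul_one]
    rw [Finset.sum_congr rfl h1, ← Finset.mul_sum, hBsum, mul_one]
  have e3 : ∑ j ∈ range (m+1), ∑ k ∈ range (m+1), |(j : ℝ) - (k : ℝ)| / 2 * B j * B k
      = (1/2) * ∑ j ∈ range (m+1), ∑ k ∈ range (m+1), |(j : ℝ) - (k : ℝ)| * B j * B k := by
    rw [Finset.mul_sum]
    refine Finset.sum_congr rfl fun j _ => ?_
    rw [Finset.mul_sum]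
    exact Finset.sum_congr rfl fun k _ => by ring
  rw [e1, e2, e4, e3]
  linarith

lemma const_div_lim (c : ℝ) : Filter.Tendsto (fun m : ℕ => 1 - c / (m:ℝ)) atTop (nhds 1) := by
  have h := tendsto_const_div_atTop_nhds_zero_nat c
  simpa using tendsto_const_nhds.sub h

lemma descFac_lim (k : ℕ) :
    Filter.Tendsto (fun m : ℕ => (m.descFactorial k : ℝ) / (m:ℝ)^k) atTop (nhds 1) := by
  have heq : (fun m : ℕ => (m.descFactorial k : ℝ) / (m:ℝ)^k)
      =ᶠ[atTop] fun m => ∏ i ∈ range k, (1 - (i:ℝ)/m) := by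
    filter_upwards [eventually_ge_atTop (max k 1)] with m hm
    have hm1 : (1:ℕ) ≤ m := le_trans (le_max_right _ _) hm
    have hmk : k ≤ m := le_trans (le_max_left _ _) hm
    have hm0 : (m:ℝ) ≠ 0 := Nat.cast_ne_zero.mpr (by omega)
    rw [Nat.descFactorial_eq_prod_range]
    push_cast
    rw [show ((m:ℝ))^k = ∏ _i ∈ range k, (m:ℝ) by rw [Finset.prod_const, Finset.card_range],
      ← Finset.prod_div_distrib]
    refine Finset.prod_congr rfl fun i hi => ?_
    have hik : i < k := Finset.mem_range.mp hi
    rw [Nat.cast_sub (by omega)]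
    field_simp
  have hlim : Filter.Tendsto (fun m : ℕ => ∏ i ∈ range k, (1 - (i:ℝ)/m)) atTop
      (nhds (∏ _i ∈ range k, (1:ℝ))) :=
    tendsto_finset_prod _ fun i _ => const_div_lim i
  simpa using hlim.congr' heq.symm

lemma poissonLim (l : ℝ) (hl : 0 < l) (k : ℕ) :
    Filter.Tendsto (fun m : ℕ => (m.choose k : ℝ) * (l/m)^k * (1 - l/m)^(m-k)) atTop
      (nhds (Real.exp (-l) * l^k / (k.factorial : ℝ))) := by
  have hbase : Filter.Tendsto (fun m : ℕ => 1 - l / (m:ℝ)) atTop (nhds 1) := const_div_lim l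
  have hC : Filter.Tendsto (fun m : ℕ => (1 - l/(m:ℝ))^m) atTop (nhds (Real.exp (-l))) := by
    have h := Real.tendsto_one_add_div_pow_exp (-l)
    refine h.congr fun m => ?_
    rw [neg_div, ← sub_eq_add_neg]
  have hD : Filter.Tendsto (fun m : ℕ => (1 - l/(m:ℝ))^k) atTop (nhds 1) := by
    simpa using hbase.pow k
  have hmain : Filter.Tendsto (fun m : ℕ =>
      (m.descFactorial k : ℝ)/(m:ℝ)^k * (l^k/(k.factorial : ℝ))
        * ((1 - l/(m:ℝ))^m / (1 - l/(m:ℝ))^k)) atTop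
      (nhds (1 * (l^k/(k.factorial : ℝ)) * (Real.exp (-l) / 1))) :=
    ((descFac_lim k).mul tendsto_const_nhds).mul (hC.div hD one_ne_zero)
  have heq : (fun m : ℕ => (m.descFactorial k : ℝ)/(m:ℝ)^k * (l^k/(k.factorial : ℝ))
        * ((1 - l/(m:ℝ))^m / (1 - l/(m:ℝ))^k))
      =ᶠ[atTop] fun m => (m.choose k : ℝ) * (l/m)^k * (1 - l/m)^(m-k) := by
    filter_upwards [eventually_ge_atTop (max k (Nat.floor l + 1))] with m hm
    have hmk : k ≤ m := le_trans (le_max_left _ _) hm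
    have hml : l < (m:ℝ) := by
      have : Nat.floor l + 1 ≤ m := le_trans (le_max_right _ _) hm
      calc l < (Nat.floor l + 1 : ℕ) := by
            push_cast; exact Nat.lt_floor_add_one l
        _ ≤ (m:ℝ) := Nat.cast_le.mpr this
    have hm0 : (m:ℝ) ≠ 0 := ne_of_gt (lt_trans hl hml)
    have hbne : (1 - l/(m:ℝ)) ≠ 0 := by
      have : l/(m:ℝ) < 1 := (div_lt_one (by positivity)).mpr hml
      linarith
    have hchoose : (m.choose k : ℝ) = (m.descFactorial k : ℝ) / (k.factorial : ℝ) := by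
      rw [eq_div_iff (by positivity : (k.factorial:ℝ) ≠ 0), mul_comm]
      exact_mod_cast (Nat.descFactorial_eq_factorial_mul_choose m k).symm
    rw [hchoose, pow_sub₀ _ hbne hmk, div_pow]
    field_simp
  rw [show Real.exp (-l) * l^k / (k.factorial : ℝ)
      = 1 * (l^k/(k.factorial : ℝ)) * (Real.exp (-l) / 1) by ring]
  exact hmain.congr' heq

lemma sumKfac (l : ℝ) : Summable (fun k : ℕ => (k : ℝ) * (l ^ k / (k.factorial : ℝ))) := by
  apply (summable_nat_add_iff 1).mp
  have h : (fun k : ℕ => ((k + 1 : ℕ) : ℝ) * (l ^ (k + 1) / ((k + 1).factorial : ℝ)))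
      = fun k : ℕ => l * (l ^ k / (k.factorial : ℝ)) := by
    funext k
    have h1 : ((k + 1).factorial : ℝ) = ((k : ℝ) + 1) * (k.factorial : ℝ) := by
      rw [Nat.factorial_succ]; push_cast; ring
    rw [h1, pow_succ]
    have hk : ((k : ℝ) + 1) ≠ 0 := by positivity
    have hf : (k.factorial : ℝ) ≠ 0 := by positivity
    field_simp
    push_cast
    ring
  rw [show (fun k : ℕ => ((k : ℕ) + 1 : ℕ) * (l ^ ((k : ℕ) + 1) / (((k : ℕ) + 1).factorial : ℝ)))
    = fun k : ℕ => l * (l ^ k / (k.factorial : ℝ)) from h]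
  exact (Real.summable_pow_div_factorial l).mul_left l

set_option maxHeartbeats 1000000 in
lemma boundSummable (l : ℝ) (hl : 0 < l) :
    Summable (fun p : ℕ × ℕ =>
      ((p.1 : ℝ) + (p.2 : ℝ)) * (l ^ p.1 / (p.1.factorial : ℝ)) * (l ^ p.2 / (p.2.factorial : ℝ))) := by
  have ha : (0:ℕ → ℝ) ≤ fun k : ℕ => (k : ℝ) * (l ^ k / (k.factorial : ℝ)) :=
    Pi.le_def.mpr fun k => by positivity
  have hb : (0:ℕ → ℝ) ≤ fun k : ℕ => l ^ k / (k.factorial : ℝ) :=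
    Pi.le_def.mpr fun k => by positivity
  have h1 : Summable (fun p : ℕ × ℕ =>
      ((p.1 : ℝ) * (l ^ p.1 / (p.1.factorial : ℝ))) * (l ^ p.2 / (p.2.factorial : ℝ))) :=
    Summable.mul_of_nonneg (sumKfac l) (Real.summable_pow_div_factorial l) ha hb
  have h2 : Summable (fun p : ℕ × ℕ =>
      (l ^ p.1 / (p.1.factorial : ℝ)) * ((p.2 : ℝ) * (l ^ p.2 / (p.2.factorial : ℝ)))) :=
    Summable.mul_of_nonneg (Real.summable_pow_div_factorial l) (sumKfac l) hb ha
  have := h1.add h2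
  refine this.congr fun p => ?_
  ring

lemma B_bound (l : ℝ) (hl : 0 < l) {m : ℕ} (hm : l ≤ (m : ℝ)) (k : ℕ) :
    (m.choose k : ℝ) * (l / m) ^ k * (1 - l / m) ^ (m - k) ∈
      Set.Icc (0 : ℝ) (l ^ k / (k.factorial : ℝ)) := by
  have hm0 : (0:ℝ) < m := lt_of_lt_of_le hl hm
  have hp0 : (0:ℝ) ≤ l / m := by positivity
  have hp1 : l / m ≤ 1 := (div_le_one hm0).mpr hm
  have hq0 : (0:ℝ) ≤ 1 - l / m := by linarith
  have hq1 : (1 - l / m) ^ (m - k) ≤ 1 := pow_le_one₀ hq0 (by linarith)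
  have hfac : (0:ℝ) < (k.factorial : ℝ) := by positivity
  have hch : (m.choose k : ℝ) * (k.factorial : ℝ) ≤ (m : ℝ) ^ k := by
    have h := Nat.descFactorial_le_pow m k
    rw [Nat.descFactorial_eq_factorial_mul_choose] at h
    calc (m.choose k : ℝ) * (k.factorial : ℝ) = ((k.factorial * m.choose k : ℕ) : ℝ) := by
          push_cast; ring
      _ ≤ ((m ^ k : ℕ) : ℝ) := Nat.cast_le.mpr h
      _ = (m : ℝ) ^ k := by push_cast; ring
  constructor
  · positivity
  · have key : (m.choose k : ℝ) * (l / m) ^ k ≤ l ^ k / (k.factorial : ℝ) := by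
      rw [div_pow, show (m.choose k : ℝ) * (l ^ k / (m:ℝ) ^ k)
          = ((m.choose k : ℝ) * l ^ k) / (m:ℝ) ^ k from by ring,
        div_le_div_iff₀ (by positivity) hfac]
      have hlk : (0:ℝ) ≤ l ^ k := by positivity
      nlinarith [mul_le_mul_of_nonneg_right hch hlk]
    calc (m.choose k : ℝ) * (l / m) ^ k * (1 - l / m) ^ (m - k)
        ≤ (m.choose k : ℝ) * (l / m) ^ k * 1 := by
          apply mul_le_mul_of_nonneg_left hq1 (by positivity)
      _ = (m.choose k : ℝ) * (l / m) ^ k := by ring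
      _ ≤ l ^ k / (k.factorial : ℝ) := key

noncomputable def Gf (l : ℝ) : ℕ × ℕ → ℝ :=
  fun q => l ^ (2 * q.1 + q.2 + 1) / (((q.1 + q.2).factorial : ℝ) * (q.1.factorial : ℝ))

noncomputable def Hf (l : ℝ) : ℕ × ℕ → ℝ :=
  fun q => if q.1 = 0 then 0 else
    l ^ (2 * q.1 + q.2 + 1) / (((q.1 + q.2 + 1).factorial : ℝ) * ((q.1 - 1).factorial : ℝ))

noncomputable def Ff (l : ℝ) : ℕ × ℕ → ℝ :=
  fun q => ((q.2 : ℝ) + 1) * (l ^ (2 * q.1 + q.2 + 1) /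
    (((q.1 + q.2 + 1).factorial : ℝ) * (q.1.factorial : ℝ)))

lemma prodSummable (c u v : ℝ) (hu0 : 0 ≤ u) (hv0 : 0 ≤ v) :
    Summable (fun q : ℕ × ℕ =>
      c * (u ^ q.1 / (q.1.factorial : ℝ)) * (v ^ q.2 / (q.2.factorial : ℝ))) := by
  have ha : (0:ℕ → ℝ) ≤ fun k : ℕ => u ^ k / (k.factorial : ℝ) :=
    Pi.le_def.mpr fun k => by positivity
  have hb : (0:ℕ → ℝ) ≤ fun k : ℕ => v ^ k / (k.factorial : ℝ) :=
    Pi.le_def.mpr fun k => by positivity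
  have h := (Summable.mul_of_nonneg (Real.summable_pow_div_factorial u)
    (Real.summable_pow_div_factorial v) ha hb).mul_left c
  exact h.congr fun q => by ring

lemma Gf_nonneg (l : ℝ) (hl : 0 < l) (q : ℕ × ℕ) : 0 ≤ Gf l q := by
  unfold Gf; positivity

lemma Hf_nonneg (l : ℝ) (hl : 0 < l) (q : ℕ × ℕ) : 0 ≤ Hf l q := by
  unfold Hf; split
  · exact le_refl _
  · positivity

lemma Gshift_le (l : ℝ) (hl : 0 < l) (j : ℕ) (q : ℕ × ℕ) :
    Gf l (q.1, q.2 + j) ≤ l ^ (j+1) * ((l ^ 2) ^ q.1 / (q.1.factorial : ℝ)) *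
      (l ^ q.2 / (q.2.factorial : ℝ)) := by
  obtain ⟨k, i⟩ := q
  unfold Gf
  dsimp only
  have h1 : (0:ℝ) < (k.factorial : ℝ) := by positivity
  have h2 : (0:ℝ) < (i.factorial : ℝ) := by positivity
  have hfl : ((i.factorial : ℝ)) ≤ ((k + (i + j)).factorial : ℝ) :=
    Nat.cast_le.mpr (Nat.factorial_le (by omega))
  have hnum : l ^ (2 * k + (i + j) + 1) = l ^ (j+1) * (l ^ 2) ^ k * l ^ i := by
    rw [← pow_mul, ← pow_add, ← pow_add]
    congr 1
    ring
  calc l ^ (2 * k + (i + j) + 1) / (((k + (i + j)).factorial : ℝ) * (k.factorial : ℝ))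
      ≤ l ^ (2 * k + (i + j) + 1) / ((i.factorial : ℝ) * (k.factorial : ℝ)) := by
        apply div_le_div_of_nonneg_left (by positivity) (by positivity)
        exact mul_le_mul_of_nonneg_right hfl h1.le
    _ = l ^ (j+1) * ((l ^ 2) ^ k / (k.factorial : ℝ)) * (l ^ i / (i.factorial : ℝ)) := by
        rw [hnum]; field_simp

lemma SG (l : ℝ) (hl : 0 < l) : Summable (Gf l) := by
  refine Summable.of_nonneg_of_le (Gf_nonneg l hl) (fun q => ?_)
    (prodSummable (l ^ 1) (l ^ 2) l (by positivity) hl.le)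
  have h := Gshift_le l hl 0 q
  simpa using h

lemma Sshift (l : ℝ) (hl : 0 < l) : Summable (fun q : ℕ × ℕ => Gf l (q.1, q.2 + 2)) := by
  refine Summable.of_nonneg_of_le (fun q => Gf_nonneg l hl _) (fun q => Gshift_le l hl 2 q)
    (prodSummable (l ^ 3) (l ^ 2) l (by positivity) hl.le)

lemma Hshift_eq (l : ℝ) (q : ℕ × ℕ) : Hf l (q.1 + 1, q.2) = Gf l (q.1, q.2 + 2) := by
  obtain ⟨k, i⟩ := q
  unfold Hf Gf
  simp only [Nat.add_sub_cancel]
  rw [if_neg (by omega)]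
  have e1 : 2 * (k + 1) + i + 1 = 2 * k + (i + 2) + 1 := by ring
  have e2 : k + 1 + i + 1 = k + (i + 2) := by ring
  rw [e1, e2]

lemma SH (l : ℝ) (hl : 0 < l) : Summable (Hf l) := by
  have hinj : Function.Injective (fun q : ℕ × ℕ => (q.1 + 1, q.2)) := by
    intro a b h
    simp only [Prod.mk.injEq] at h
    exact Prod.ext (by omega) h.2
  have hsupp : ∀ x ∉ Set.range (fun q : ℕ × ℕ => (q.1 + 1, q.2)), Hf l x = 0 := by
    rintro ⟨a, b⟩ hx
    have ha : a = 0 := by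
      by_contra h
      exact hx ⟨(a - 1, b), by simp [Prod.ext_iff]; omega⟩
    simp [Hf, ha]
  rw [← hinj.summable_iff hsupp]
  exact (Sshift l hl).congr fun q => (Hshift_eq l q).symm

lemma tsumH (l : ℝ) (hl : 0 < l) :
    ∑' q : ℕ × ℕ, Hf l q = ∑' q : ℕ × ℕ, Gf l (q.1, q.2 + 2) := by
  have hinj : Function.Injective (fun q : ℕ × ℕ => (q.1 + 1, q.2)) := by
    intro a b h
    simp only [Prod.mk.injEq] at h
    exact Prod.ext (by omega) h.2
  have hsupp : Function.support (Hf l) ⊆ Set.range (fun q : ℕ × ℕ => (q.1 + 1, q.2)) := by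
    rintro ⟨a, b⟩ hx
    rcases Nat.eq_zero_or_pos a with h | h
    · exfalso; apply hx; simp [Hf, h]
    · exact ⟨(a - 1, b), by simp [Prod.ext_iff]; omega⟩
  have := hinj.tsum_eq hsupp
  rw [← this]
  exact tsum_congr fun q => Hshift_eq l q

lemma FGH (l : ℝ) (hl : 0 < l) (q : ℕ × ℕ) : Ff l q = Gf l q - Hf l q := by
  obtain ⟨k, i⟩ := q
  unfold Ff Gf Hf
  dsimp only
  rcases Nat.eq_zero_or_pos k with hk | hk
  · subst hk
    rw [if_pos rfl]
    simp only [Nat.zero_add, Nat.mul_zero, Nat.factorial_zero, Nat.cast_one, mul_one,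
      sub_zero, Nat.zero_mul, Nat.cast_ofNat]
    norm_num
    have h1 : ((i+1).factorial : ℝ) = ((i:ℝ)+1) * (i.factorial : ℝ) := by
      rw [Nat.factorial_succ]; push_cast; ring
    rw [h1]
    have h2 : (0:ℝ) < (i.factorial : ℝ) := by positivity
    field_simp
  · rw [if_neg (by omega)]
    obtain ⟨j, rfl⟩ : ∃ j, k = j + 1 := ⟨k - 1, by omega⟩
    simp only [Nat.add_sub_cancel]
    have h1 : ((j + 1 + i + 1).factorial : ℝ)
        = ((j:ℝ) + i + 2) * ((j + 1 + i).factorial : ℝ) := by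
      rw [show j + 1 + i + 1 = (j + 1 + i) + 1 from rfl, Nat.factorial_succ]; push_cast; ring
    have h2 : ((j + 1).factorial : ℝ) = ((j:ℝ) + 1) * (j.factorial : ℝ) := by
      rw [Nat.factorial_succ]; push_cast; ring
    rw [h1, h2]
    have p1 : (0:ℝ) < ((j + 1 + i).factorial : ℝ) := by positivity
    have p2 : (0:ℝ) < (j.factorial : ℝ) := by positivity
    have p3 : (0:ℝ) < ((j:ℝ) + i + 2) := by positivity
    have p4 : (0:ℝ) < ((j:ℝ) + 1) := by positivity
    field_simp
    ring

lemma S0 (l : ℝ) (hl : 0 < l) : Summable (fun k : ℕ => Gf l (k, 0)) := by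
  refine Summable.of_nonneg_of_le (fun k => Gf_nonneg l hl _)
    (fun k => Gshift_le l hl 0 (k, 0))
    (((Real.summable_pow_div_factorial (l ^ 2)).mul_left (l ^ 1)).mul_right
      (l ^ 0 / ((Nat.factorial 0 : ℕ) : ℝ)))

lemma S1 (l : ℝ) (hl : 0 < l) : Summable (fun k : ℕ => Gf l (k, 1)) := by
  refine Summable.of_nonneg_of_le (fun k => Gf_nonneg l hl _)
    (fun k => Gshift_le l hl 1 (k, 0))
    (((Real.summable_pow_div_factorial (l ^ 2)).mul_left (l ^ 2)).mul_right
      (l ^ 0 / ((Nat.factorial 0 : ℕ) : ℝ)))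

lemma tsumF (l : ℝ) (hl : 0 < l) :
    ∑' q : ℕ × ℕ, Ff l q
      = l * (∑' k : ℕ, l ^ (2*k) / ((k.factorial : ℝ))^2)
      + l * (∑' k : ℕ, l ^ (2*k+1) / ((k.factorial : ℝ) * ((k+1).factorial : ℝ))) := by
  have hG := SG l hl
  obtain ⟨hslice, _⟩ := (summable_prod_of_nonneg (Pi.le_def.mpr (Gf_nonneg l hl))).mp hG
  have hGsh := Sshift l hl
  obtain ⟨hslice2, hcols2⟩ :=
    (summable_prod_of_nonneg (Pi.le_def.mpr fun q => Gf_nonneg l hl _)).mp hGsh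
  have hdecomp : ∀ k : ℕ, ∑' i, Gf l (k, i)
      = Gf l (k, 0) + Gf l (k, 1) + ∑' i, Gf l (k, i + 2) := by
    intro k
    rw [Summable.tsum_eq_zero_add (hslice k),
      Summable.tsum_eq_zero_add ((summable_nat_add_iff 1).mpr (hslice k))]
    rw [show (fun b : ℕ => Gf l (k, b + 1 + 1)) = fun b : ℕ => Gf l (k, b + 2) from rfl]
    ring
  have step1 : ∑' q : ℕ × ℕ, Ff l q
      = ∑' q : ℕ × ℕ, Gf l q - ∑' q : ℕ × ℕ, Hf l q := by
    rw [← Summable.tsum_sub hG (SH l hl)]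
    exact tsum_congr (FGH l hl)
  rw [step1, tsumH l hl, Summable.tsum_prod' hG hslice, Summable.tsum_prod' hGsh hslice2,
    tsum_congr hdecomp, Summable.tsum_add ((S0 l hl).add (S1 l hl)) hcols2,
    Summable.tsum_add (S0 l hl) (S1 l hl)]
  have e0 : ∑' k : ℕ, Gf l (k, 0) = l * ∑' k : ℕ, l ^ (2*k) / ((k.factorial : ℝ))^2 := by
    rw [← tsum_mul_left]
    refine tsum_congr fun k => ?_
    unfold Gf
    simp only [Nat.add_zero]
    rw [pow_succ]
    have : (0:ℝ) < (k.factorial : ℝ) := by positivity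
    field_simp
  have e1 : ∑' k : ℕ, Gf l (k, 1)
      = l * ∑' k : ℕ, l ^ (2*k+1) / ((k.factorial : ℝ) * ((k+1).factorial : ℝ)) := by
    rw [← tsum_mul_left]
    refine tsum_congr fun k => ?_
    unfold Gf
    dsimp only
    rw [show 2 * k + 1 + 1 = (2 * k + 1) + 1 from rfl, pow_succ]
    have h1 : (0:ℝ) < (k.factorial : ℝ) := by positivity
    have h2 : (0:ℝ) < ((k+1).factorial : ℝ) := by positivity
    field_simp
  rw [e0, e1]
  ring



noncomputable def posF (l : ℝ) : ℕ × ℕ → ℝ :=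
  fun p => max ((p.1 : ℝ) - (p.2 : ℝ)) 0 * (l ^ p.1 / (p.1.factorial : ℝ)) *
    (l ^ p.2 / (p.2.factorial : ℝ))

lemma posF_nonneg (l : ℝ) (hl : 0 < l) (p : ℕ × ℕ) : 0 ≤ posF l p := by
  unfold posF; positivity

lemma posF_le (l : ℝ) (hl : 0 < l) (p : ℕ × ℕ) :
    posF l p ≤ ((p.1 : ℝ) + (p.2 : ℝ)) * (l ^ p.1 / (p.1.factorial : ℝ)) *
      (l ^ p.2 / (p.2.factorial : ℝ)) := by
  unfold posF
  have h1 : max ((p.1 : ℝ) - (p.2 : ℝ)) 0 ≤ (p.1 : ℝ) + (p.2 : ℝ) := by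
    apply max_le
    · have : (0:ℝ) ≤ (p.2 : ℝ) := Nat.cast_nonneg _
      linarith
    · positivity
  apply mul_le_mul_of_nonneg_right _ (by positivity)
  exact mul_le_mul_of_nonneg_right h1 (by positivity)

lemma SposF (l : ℝ) (hl : 0 < l) : Summable (posF l) :=
  Summable.of_nonneg_of_le (posF_nonneg l hl) (posF_le l hl) (boundSummable l hl)

lemma posF_eq_F (l : ℝ) (hl : 0 < l) (q : ℕ × ℕ) :
    posF l (q.1 + q.2 + 1, q.1) = Ff l q := by
  obtain ⟨k, i⟩ := q
  unfold posF Ff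
  dsimp only
  have h1 : max (((k + i + 1 : ℕ) : ℝ) - (k : ℝ)) 0 = (i : ℝ) + 1 := by
    rw [max_eq_left]
    · push_cast; ring
    · push_cast; linarith [Nat.cast_nonneg (α := ℝ) i]
  rw [h1, show 2 * k + i + 1 = (k + i + 1) + k from by ring, pow_add]
  have h2 : (0:ℝ) < ((k + i + 1).factorial : ℝ) := by positivity
  have h3 : (0:ℝ) < (k.factorial : ℝ) := by positivity
  field_simp
  ring

lemma tsum_posF (l : ℝ) (hl : 0 < l) :
    ∑' p : ℕ × ℕ, posF l p = ∑' q : ℕ × ℕ, Ff l q := by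
  have hinj : Function.Injective (fun q : ℕ × ℕ => (q.1 + q.2 + 1, q.1)) := by
    intro a b h
    simp only [Prod.mk.injEq] at h
    exact Prod.ext h.2 (by omega)
  have hsupp : Function.support (posF l) ⊆
      Set.range (fun q : ℕ × ℕ => (q.1 + q.2 + 1, q.1)) := by
    rintro ⟨a, b⟩ hx
    have hab : b < a := by
      by_contra h
      apply hx
      unfold posF
      dsimp only
      rw [max_eq_right (sub_nonpos.mpr (Nat.cast_le.mpr (by omega : a ≤ b))),
        zero_mul, zero_mul]
    exact ⟨(b, a - b - 1), by dsimp only; rw [Prod.mk.injEq]; omega⟩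
  exact (hinj.tsum_eq hsupp).symm.trans (tsum_congr fun q => posF_eq_F l hl q)

lemma tsumPhi (l : ℝ) (hl : 0 < l) :
    ∑' p : ℕ × ℕ, |(p.1 : ℝ) - (p.2 : ℝ)| * (l ^ p.1 / (p.1.factorial : ℝ)) *
        (l ^ p.2 / (p.2.factorial : ℝ))
      = 2 * ∑' q : ℕ × ℕ, Ff l q := by
  have hsplit : ∀ p : ℕ × ℕ,
      |(p.1 : ℝ) - (p.2 : ℝ)| * (l ^ p.1 / (p.1.factorial : ℝ)) *
        (l ^ p.2 / (p.2.factorial : ℝ))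
      = posF l p + posF l (p.2, p.1) := by
    intro p
    unfold posF
    dsimp only
    rcases le_total ((p.1 : ℝ)) ((p.2 : ℝ)) with h | h
    · rw [abs_of_nonpos (by linarith), max_eq_right (by linarith),
        max_eq_left (by linarith)]
      ring
    · rw [abs_of_nonneg (by linarith), max_eq_left (by linarith),
        max_eq_right (by linarith)]
      ring
  have hswap : Summable (fun p : ℕ × ℕ => posF l (p.2, p.1)) :=
    ((Equiv.prodComm ℕ ℕ).summable_iff).mpr (SposF l hl)
  rw [tsum_congr hsplit, Summable.tsum_add (SposF l hl) hswap]
  have : ∑' p : ℕ × ℕ, posF l (p.2, p.1) = ∑' p : ℕ × ℕ, posF l p :=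
    (Equiv.prodComm ℕ ℕ).tsum_eq (posF l)
  rw [this, tsum_posF l hl]
  ring

lemma abs_cast_sub_le (a b : ℕ) : |(a : ℝ) - (b : ℝ)| ≤ (a : ℝ) + (b : ℝ) := by
  have h1 : |(a : ℝ) - (b : ℝ)| ≤ |(a:ℝ)| + |(b:ℝ)| := abs_sub _ _
  rwa [Nat.abs_cast, Nat.abs_cast] at h1

theorem binomial_min_boundary_asymptotics (l : ℝ) (hl : 0 < l) :
    Filter.Tendsto
      (fun m : ℕ => (m : ℝ) *
        ∑ j ∈ Finset.range (m + 1), ∑ k ∈ Finset.range (m + 1),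
          ((min j k : ℝ) / m - l / m) *
            ((m.choose j : ℝ) * (l / m) ^ j * (1 - l / m) ^ (m - j)) *
            ((m.choose k : ℝ) * (l / m) ^ k * (1 - l / m) ^ (m - k)))
      Filter.atTop
      (nhds (-(l * Real.exp (-2 * l) *
        ((∑' k : ℕ, l ^ (2 * k) / ((k.factorial : ℝ)) ^ 2) +
         (∑' k : ℕ, l ^ (2 * k + 1) / ((k.factorial : ℝ) * ((k + 1).factorial : ℝ))))))) := by
  set fB : ℕ → ℕ × ℕ → ℝ := fun m p =>
    |(p.1 : ℝ) - (p.2 : ℝ)| *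
      ((m.choose p.1 : ℝ) * (l / m) ^ p.1 * (1 - l / m) ^ (m - p.1)) *
      ((m.choose p.2 : ℝ) * (l / m) ^ p.2 * (1 - l / m) ^ (m - p.2)) with hfB
  set gP : ℕ × ℕ → ℝ := fun p =>
    |(p.1 : ℝ) - (p.2 : ℝ)| * (Real.exp (-l) * l ^ p.1 / (p.1.factorial : ℝ)) *
      (Real.exp (-l) * l ^ p.2 / (p.2.factorial : ℝ)) with hgP
  have hpt : ∀ p : ℕ × ℕ, Filter.Tendsto (fun m => fB m p) atTop (nhds (gP p)) := fun p =>
    (tendsto_const_nhds.mul (poissonLim l hl p.1)).mul (poissonLim l hl p.2)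
  have hbound : ∀ᶠ m : ℕ in atTop, ∀ p : ℕ × ℕ, ‖fB m p‖ ≤
      ((p.1 : ℝ) + (p.2 : ℝ)) * (l ^ p.1 / (p.1.factorial : ℝ)) *
        (l ^ p.2 / (p.2.factorial : ℝ)) := by
    filter_upwards [eventually_ge_atTop (Nat.ceil l)] with m hm
    intro p
    have hlm : l ≤ (m : ℝ) := le_trans (Nat.le_ceil l) (Nat.cast_le.mpr hm)
    obtain ⟨h10, h1u⟩ := B_bound l hl hlm p.1
    obtain ⟨h20, h2u⟩ := B_bound l hl hlm p.2
    have hfB0 : 0 ≤ fB m p := by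
      rw [hfB]
      exact mul_nonneg (mul_nonneg (abs_nonneg _) h10) h20
    rw [Real.norm_eq_abs, abs_of_nonneg hfB0, hfB]
    have habs := abs_cast_sub_le p.1 p.2
    apply mul_le_mul
    · apply mul_le_mul habs h1u h10
      positivity
    · exact h2u
    · exact h20
    · positivity
  have hconv := tendsto_tsum_of_dominated_convergence (boundSummable l hl) hpt hbound
  have hconv2 := hconv.const_mul (-(1/2) : ℝ)
  have hfin : (fun m : ℕ => (-(1/2) : ℝ) * ∑' p : ℕ × ℕ, fB m p) =ᶠ[atTop]
      (fun m : ℕ => (m : ℝ) *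
        ∑ j ∈ Finset.range (m + 1), ∑ k ∈ Finset.range (m + 1),
          ((min j k : ℝ) / m - l / m) *
            ((m.choose j : ℝ) * (l / m) ^ j * (1 - l / m) ^ (m - j)) *
            ((m.choose k : ℝ) * (l / m) ^ k * (1 - l / m) ^ (m - k))) := by
    filter_upwards [eventually_ge_atTop 1] with m hm
    rw [reduce l hm]
    congr 1
    have hvanish : ∀ p : ℕ × ℕ, p ∉ (Finset.range (m+1)) ×ˢ (Finset.range (m+1)) →
        fB m p = 0 := by
      intro p hp
      rw [Finset.mem_product] at hp
      simp only [hfB]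
      rcases not_and_or.mp hp with h | h
      · simp only [Finset.mem_range, not_lt] at h
        rw [Nat.choose_eq_zero_of_lt (by omega : m < p.1)]
        simp
      · simp only [Finset.mem_range, not_lt] at h
        rw [Nat.choose_eq_zero_of_lt (by omega : m < p.2)]
        simp
    rw [tsum_eq_sum hvanish, Finset.sum_product]
  have hval : (-(1/2) : ℝ) * ∑' p : ℕ × ℕ, gP p
      = -(l * Real.exp (-2 * l) *
        ((∑' k : ℕ, l ^ (2 * k) / ((k.factorial : ℝ)) ^ 2) +
         (∑' k : ℕ, l ^ (2 * k + 1) / ((k.factorial : ℝ) * ((k + 1).factorial : ℝ))))) := by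
    have hgPeq : ∀ p : ℕ × ℕ, gP p = Real.exp (-2 * l) *
        (|(p.1 : ℝ) - (p.2 : ℝ)| * (l ^ p.1 / (p.1.factorial : ℝ)) *
          (l ^ p.2 / (p.2.factorial : ℝ))) := by
      intro p
      rw [hgP]
      dsimp only
      rw [show (-2 : ℝ) * l = -l + -l from by ring, Real.exp_add]
      ring
    rw [tsum_congr hgPeq, tsum_mul_left, tsumPhi l hl, tsumF l hl]
    ring
  rw [← hval]
  exact hconv2.congr' hfin


end BinomAux
end

section
/- For x ∈ Int(S_d) fixed, ∑_{k ∈ ℕ₀^d ∩ (m−1)S_d} P³_{k,m−1}(x) = O(m^{−d}) as m → ∞. -/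
open scoped BigOperators Classical
open Finset Real Filter MeasureTheory



lemma fact_lower_weak (k : ℕ) : ((k:ℝ)/Real.exp 1)^k ≤ k.factorial := by
  have h := Real.sum_le_exp_of_nonneg (x := (k:ℝ)) (Nat.cast_nonneg k) (k+1)
  have h2 : ((k:ℝ))^k / k.factorial ≤ Real.exp k := by
    refine le_trans ?_ h
    exact Finset.single_le_sum (f := fun i => (k:ℝ)^i / i.factorial)
      (fun i _ => by positivity) (Finset.self_mem_range_succ k)
  rw [div_pow]
  rw [div_le_iff₀ (by positivity)] at h2 ⊢
  calc (k:ℝ)^k ≤ Real.exp k * k.factorial := h2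
    _ = (k.factorial:ℝ) * Real.exp 1 ^ k := by rw [← Real.exp_nat_mul]; ring_nf

lemma stirling_ge (m : ℕ) : Real.sqrt Real.pi ≤ Stirling.stirlingSeq (m + 1) := by
  have ht : Tendsto (Stirling.stirlingSeq ∘ Nat.succ) atTop (nhds (Real.sqrt Real.pi)) := by
    have : (Stirling.stirlingSeq ∘ Nat.succ) = fun n => Stirling.stirlingSeq (n + 1) := rfl
    rw [this]
    exact (Filter.tendsto_add_atTop_iff_nat 1).mpr Stirling.tendsto_stirlingSeq_sqrt_pi
  exact Stirling.stirlingSeq'_antitone.le_of_tendsto ht m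

lemma fact_lower_strong (k : ℕ) (hk : 1 ≤ k) :
    Real.sqrt k * ((k:ℝ)/Real.exp 1)^k ≤ k.factorial := by
  obtain ⟨m, rfl⟩ := Nat.exists_eq_add_of_le hk
  have h1 : Real.sqrt Real.pi ≤ Stirling.stirlingSeq (1 + m) := by
    rw [Nat.add_comm]; exact stirling_ge m
  have h2 : ((1+m).factorial : ℝ) = (Stirling.stirlingSeq (1+m)) * (Real.sqrt (2 * (1+m)) * (((1+m:ℕ):ℝ)/Real.exp 1)^(1+m)) := by
    rw [Stirling.stirlingSeq]
    field_simp
    simp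
  rw [h2]
  have h3 : (1:ℝ) ≤ Real.sqrt Real.pi := by
    rw [show (1:ℝ) = Real.sqrt 1 by simp]
    exact Real.sqrt_le_sqrt (by nlinarith [Real.pi_gt_three])
  have hb : Real.sqrt ((1+m:ℕ)) ≤ Real.sqrt (2 * (1+m)) := by
    apply Real.sqrt_le_sqrt; push_cast; nlinarith [Nat.cast_nonneg (α := ℝ) m]
  calc Real.sqrt ((1+m:ℕ)) * (((1+m:ℕ):ℝ)/Real.exp 1)^(1+m)
      ≤ Real.sqrt (2*(1+m)) * (((1+m:ℕ):ℝ)/Real.exp 1)^(1+m) := by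
        apply mul_le_mul_of_nonneg_right hb (by positivity)
    _ = 1 * (Real.sqrt (2*(1+m)) * (((1+m:ℕ):ℝ)/Real.exp 1)^(1+m)) := by ring
    _ ≤ (Stirling.stirlingSeq (1+m)) * (Real.sqrt (2 * (1+m)) * (((1+m:ℕ):ℝ)/Real.exp 1)^(1+m)) := by
        apply mul_le_mul_of_nonneg_right (le_trans h3 h1) (by positivity)

lemma fact_upper (n : ℕ) (hn : 1 ≤ n) :
    (n.factorial : ℝ) ≤ Real.exp 1 * Real.sqrt n * ((n:ℝ)/Real.exp 1)^n := by
  obtain ⟨m, rfl⟩ := Nat.exists_eq_add_of_le hn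
  have h1 : Stirling.stirlingSeq (1+m) ≤ Stirling.stirlingSeq 1 := by
    have := Stirling.stirlingSeq'_antitone (Nat.zero_le m)
    simpa [Function.comp, Nat.add_comm] using this
  rw [Stirling.stirlingSeq_one] at h1
  have h2 : ((1+m).factorial : ℝ) = (Stirling.stirlingSeq (1+m)) * (Real.sqrt (2 * (1+m)) * (((1+m:ℕ):ℝ)/Real.exp 1)^(1+m)) := by
    rw [Stirling.stirlingSeq]; field_simp
    simp
  rw [h2]
  have key : Real.sqrt (2 * (1+m)) = Real.sqrt 2 * Real.sqrt ((1+m:ℕ)) := by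
    push_cast; rw [Real.sqrt_mul (by norm_num)]
  calc (Stirling.stirlingSeq (1+m)) * (Real.sqrt (2 * (1+m)) * (((1+m:ℕ):ℝ)/Real.exp 1)^(1+m))
      ≤ (Real.exp 1 / Real.sqrt 2) * (Real.sqrt (2 * (1+m)) * (((1+m:ℕ):ℝ)/Real.exp 1)^(1+m)) := by
        apply mul_le_mul_of_nonneg_right h1 (by positivity)
    _ = Real.exp 1 * Real.sqrt ((1+m:ℕ)) * (((1+m:ℕ):ℝ)/Real.exp 1)^(1+m) := by
        rw [key]
        have : Real.sqrt 2 ≠ 0 := by positivity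
        field_simp


lemma amgm_nat {ι : Type*} (s : Finset ι) (z : ι → ℝ) (hz : ∀ i ∈ s, 0 ≤ z i)
    (K : ι → ℕ) (N : ℕ) (hN : N ≠ 0) (hsum : ∑ i ∈ s, K i = N) :
    ∏ i ∈ s, z i ^ K i ≤ (∑ i ∈ s, ((K i : ℝ)/N) * z i) ^ N := by
  have hNpos : (0:ℝ) < N := by positivity
  have h1 : ∀ i ∈ s, z i ^ K i = (z i ^ ((K i:ℝ)/N)) ^ N := by
    intro i hi
    rw [← Real.rpow_natCast (z i ^ ((K i:ℝ)/N)) N, ← Real.rpow_mul (hz i hi),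
      div_mul_cancel₀ _ (ne_of_gt hNpos), Real.rpow_natCast]
  rw [Finset.prod_congr rfl h1, Finset.prod_pow]
  apply pow_le_pow_left₀ (Finset.prod_nonneg fun i hi => Real.rpow_nonneg (hz i hi) _)
  exact Real.geom_mean_le_arith_mean_weighted s _ z
    (fun i _ => by positivity)
    (by
      rw [← Finset.sum_div]
      rw [show (∑ i ∈ s, ((K i:ℕ):ℝ)) = ((∑ i ∈ s, K i : ℕ) : ℝ) by push_cast; rfl, hsum]
      field_simp) hz

/-- Binary relative-entropy-type function: `f q = q log(p/q) + (1-q) log((1-p)/(1-q))`. -/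
noncomputable def klf (p q : ℝ) : ℝ :=
  q * (Real.log p - Real.log q) + (1 - q) * (Real.log (1 - p) - Real.log (1 - q))

lemma klf_self (p : ℝ) : klf p p = 0 := by simp [klf]

lemma klf_strictMono (p : ℝ) (hp0 : 0 < p) (hp1 : p < 1) :
    StrictMonoOn (klf p) (Set.Icc 0 p) := by
  have hcont : Continuous (klf p) := by
    have h1 : Continuous fun q : ℝ => q * Real.log q := Real.continuous_mul_log
    have h2 : Continuous fun q : ℝ => (1 - q) * Real.log (1 - q) :=
      Real.continuous_mul_log.comp (continuous_const.sub continuous_id)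
    have e1 : klf p = fun q : ℝ => (q * Real.log p - q * Real.log q)
        + ((1 - q) * Real.log (1 - p) - (1 - q) * Real.log (1 - q)) := by
      funext q; unfold klf; ring
    rw [e1]
    exact (((continuous_id.mul continuous_const).sub h1).add
      (((continuous_const.sub continuous_id).mul continuous_const).sub h2))
  apply strictMonoOn_of_deriv_pos (convex_Icc 0 p) hcont.continuousOn
  intro q hq
  rw [interior_Icc] at hq
  obtain ⟨hq0, hqp⟩ := hq
  have hq1 : q < 1 := lt_trans hqp hp1
  have hd : HasDerivAt (klf p)
      ((Real.log p - Real.log q) + (Real.log (1 - q) - Real.log (1 - p))) q := by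
    have d1 : HasDerivAt (fun q : ℝ => q * Real.log q) (Real.log q + 1) q :=
      Real.hasDerivAt_mul_log (ne_of_gt hq0)
    have d2 : HasDerivAt (fun q : ℝ => (1 - q) * Real.log (1 - q))
        (-(Real.log (1 - q) + 1)) q := by
      have := (Real.hasDerivAt_mul_log (x := 1 - q) (by linarith)).comp q
        ((hasDerivAt_id q).const_sub 1)
      simpa [Function.comp_def] using this
    have d3 : HasDerivAt (fun q : ℝ => q * Real.log p) (Real.log p) q := by
      simpa using (hasDerivAt_id q).mul_const (Real.log p)
    have d4 : HasDerivAt (fun q : ℝ => (1 - q) * Real.log (1 - p)) (-Real.log (1 - p)) q := by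
      simpa using ((hasDerivAt_id q).const_sub 1).mul_const (Real.log (1 - p))
    have : HasDerivAt (klf p)
        ((Real.log p - (Real.log q + 1)) + (-Real.log (1-p) - (-(Real.log (1-q)+1)))) q := by
      unfold klf
      have e1 : (fun q : ℝ => q * (Real.log p - Real.log q)
          + (1 - q) * (Real.log (1 - p) - Real.log (1 - q)))
          = fun q : ℝ => (q * Real.log p - q * Real.log q)
          + ((1 - q) * Real.log (1 - p) - (1 - q) * Real.log (1 - q)) := by
        funext q; ring
      rw [e1]
      exact ((d3.sub d1).add (d4.sub d2))
    convert this using 1; ring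
  rw [hd.deriv]
  have l1 : Real.log q < Real.log p := Real.log_lt_log hq0 hqp
  have l2 : Real.log (1 - p) < Real.log (1 - q) := Real.log_lt_log (by linarith) (by linarith)
  linarith

lemma klf_half_neg (p : ℝ) (hp0 : 0 < p) (hp1 : p < 1) : klf p (p/2) < 0 := by
  have h2 : p/2 < p := by linarith
  have := klf_strictMono p hp0 hp1 (a := p/2) (b := p)
    (Set.mem_Icc.mpr ⟨by linarith, by linarith⟩)
    (Set.mem_Icc.mpr ⟨by linarith, le_refl p⟩) h2
  rwa [klf_self] at this

lemma klf_le_half (p q : ℝ) (hp0 : 0 < p) (hp1 : p < 1) (hq0 : 0 ≤ q) (hq : q ≤ p/2) :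
    klf p q ≤ klf p (p/2) :=
  (klf_strictMono p hp0 hp1).monotoneOn (Set.mem_Icc.mpr ⟨hq0, by linarith⟩)
    (Set.mem_Icc.mpr ⟨by linarith, by linarith⟩) hq


section
variable {ι : Type*} [Fintype ι] [DecidableEq ι]

lemma prod_ratio_key (X : ι → ℝ) (n : ℕ) (K : ι → ℕ) (hsum : ∑ i, K i = n) :
    ((n:ℝ)/Real.exp 1)^n * ∏ i, X i ^ K i
      = (∏ i, ((n:ℝ) * X i/(K i:ℝ))^(K i)) * ∏ i, ((K i:ℝ)/Real.exp 1)^(K i) := by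
  subst hsum
  rw [← Finset.prod_pow_eq_pow_sum, ← Finset.prod_mul_distrib, ← Finset.prod_mul_distrib]
  apply Finset.prod_congr rfl
  intro i _
  rcases eq_or_ne (K i) 0 with h|h
  · simp [h]
  · rw [← mul_pow, ← mul_pow]
    congr 1
    have h1 : (K i:ℝ) ≠ 0 := Nat.cast_ne_zero.mpr h
    have h2 : Real.exp 1 ≠ 0 := by positivity
    field_simp
    try ring

lemma bound_weak (X : ι → ℝ) (hX : ∀ i, 0 ≤ X i) (n : ℕ) (hn : 1 ≤ n)
    (K : ι → ℕ) (hsum : ∑ i, K i = n) :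
    (n.factorial:ℝ) / (∏ i, ((K i).factorial:ℝ)) * ∏ i, X i ^ K i
      ≤ Real.exp 1 * Real.sqrt n * ∏ i, ((n:ℝ) * X i/(K i:ℝ))^(K i) := by
  have h1 := fact_upper n hn
  have hd : (0:ℝ) < ∏ i, ((K i:ℝ)/Real.exp 1)^(K i) := by
    apply Finset.prod_pos
    intro i _
    rcases Nat.eq_zero_or_pos (K i) with h|h
    · simp [h]
    · positivity
  have hdle : ∏ i, ((K i:ℝ)/Real.exp 1)^(K i) ≤ ∏ i, ((K i).factorial:ℝ) :=
    Finset.prod_le_prod (fun i _ => by positivity) (fun i _ => fact_lower_weak (K i))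
  have h3 : ((n:ℝ)/Real.exp 1)^n * (∏ i, X i ^ K i) / (∏ i, ((K i:ℝ)/Real.exp 1)^(K i))
      = ∏ i, ((n:ℝ) * X i/(K i:ℝ))^(K i) := by
    rw [div_eq_iff (ne_of_gt hd)]
    exact prod_ratio_key X n K hsum
  calc (n.factorial:ℝ) / (∏ i, ((K i).factorial:ℝ)) * ∏ i, X i ^ K i
      ≤ (Real.exp 1 * Real.sqrt n * ((n:ℝ)/Real.exp 1)^n) / (∏ i, ((K i:ℝ)/Real.exp 1)^(K i))
          * ∏ i, X i ^ K i := by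
        apply mul_le_mul_of_nonneg_right
          (div_le_div₀ (by positivity) h1 hd hdle)
          (Finset.prod_nonneg fun i _ => pow_nonneg (hX i) _)
    _ = Real.exp 1 * Real.sqrt n * ∏ i, ((n:ℝ) * X i/(K i:ℝ))^(K i) := by
        rw [← h3]
        field_simp

lemma bound_strong (X : ι → ℝ) (hX : ∀ i, 0 ≤ X i) (n : ℕ) (hn : 1 ≤ n)
    (K : ι → ℕ) (hsum : ∑ i, K i = n) (hK : ∀ i, 1 ≤ K i) :
    (n.factorial:ℝ) / (∏ i, ((K i).factorial:ℝ)) * ∏ i, X i ^ K i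
      ≤ Real.exp 1 * Real.sqrt n * (∏ i, Real.sqrt (K i))⁻¹
          * ∏ i, ((n:ℝ) * X i/(K i:ℝ))^(K i) := by
  have h1 := fact_upper n hn
  have hposK : ∀ i, (0:ℝ) < (K i:ℝ) := fun i => by exact_mod_cast hK i
  have hd2 : (0:ℝ) < ∏ i, ((K i:ℝ)/Real.exp 1)^(K i) := by
    apply Finset.prod_pos
    intro i _
    have := hposK i
    positivity
  have hsq : (0:ℝ) < ∏ i, Real.sqrt (K i) := by
    apply Finset.prod_pos
    intro i _
    have := hposK i
    positivity
  have hd : (0:ℝ) < ∏ i, (Real.sqrt (K i) * ((K i:ℝ)/Real.exp 1)^(K i)) := by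
    rw [Finset.prod_mul_distrib]
    exact mul_pos hsq hd2
  have hdle : ∏ i, (Real.sqrt (K i) * ((K i:ℝ)/Real.exp 1)^(K i)) ≤ ∏ i, ((K i).factorial:ℝ) :=
    Finset.prod_le_prod (fun i _ => by positivity)
      (fun i _ => fact_lower_strong (K i) (hK i))
  have h3 : ((n:ℝ)/Real.exp 1)^n * (∏ i, X i ^ K i) / (∏ i, ((K i:ℝ)/Real.exp 1)^(K i))
      = ∏ i, ((n:ℝ) * X i/(K i:ℝ))^(K i) := by
    rw [div_eq_iff (ne_of_gt hd2)]
    exact prod_ratio_key X n K hsum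
  calc (n.factorial:ℝ) / (∏ i, ((K i).factorial:ℝ)) * ∏ i, X i ^ K i
      ≤ (Real.exp 1 * Real.sqrt n * ((n:ℝ)/Real.exp 1)^n)
          / (∏ i, (Real.sqrt (K i) * ((K i:ℝ)/Real.exp 1)^(K i)))
          * ∏ i, X i ^ K i := by
        apply mul_le_mul_of_nonneg_right
          (div_le_div₀ (by positivity) h1 hd hdle)
          (Finset.prod_nonneg fun i _ => pow_nonneg (hX i) _)
    _ = Real.exp 1 * Real.sqrt n * (∏ i, Real.sqrt (K i))⁻¹
          * ∏ i, ((n:ℝ) * X i/(K i:ℝ))^(K i) := by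
        rw [Finset.prod_mul_distrib, ← h3]
        field_simp
end

set_option maxHeartbeats 2000000 in
lemma pointwise_bound_s17 {ι : Type*} [Fintype ι] [DecidableEq ι] [Nonempty ι] (X : ι → ℝ)
    (hX : ∀ i, 0 < X i) (hX1 : ∑ i, X i = 1) (hcard : 2 ≤ Fintype.card ι) :
    ∃ B > (0:ℝ), ∀ n : ℕ, 1 ≤ n → ∀ K : ι → ℕ, ∑ i, K i = n →
      (n.factorial:ℝ) / (∏ i, ((K i).factorial:ℝ)) * ∏ i, X i ^ K i
        ≤ B / (n:ℝ) ^ (((Fintype.card ι - 1 : ℕ) : ℝ)/2) := by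
  classical
  set D := Fintype.card ι with hD
  set t : ℝ := ((D - 1 : ℕ) : ℝ)/2 with ht
  have hDcast : ((D - 1 : ℕ) : ℝ) = (D:ℝ) - 1 := by
    have : 1 ≤ D := le_trans one_le_two hcard
    push_cast [Nat.cast_sub this]
    ring
  -- every X i < 1
  have hXlt : ∀ i, X i < 1 := by
    intro i
    obtain ⟨j, hj⟩ := Fintype.exists_ne_of_one_lt_card (lt_of_lt_of_le one_lt_two hcard) i
    have h1 : X i + X j ≤ ∑ k, X k := by
      have : ({i, j} : Finset ι) ⊆ Finset.univ := Finset.subset_univ _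
      calc X i + X j = ∑ k ∈ ({i, j} : Finset ι), X k := by
            rw [Finset.sum_insert (by simp [hj.symm]), Finset.sum_singleton]
        _ ≤ ∑ k, X k := Finset.sum_le_sum_of_subset_of_nonneg this
            (fun k _ _ => (hX k).le)
    rw [hX1] at h1
    have := hX j
    linarith
  -- epsilon
  have hne : (Finset.univ : Finset ι).Nonempty := Finset.univ_nonempty
  set ε : ℝ := (Finset.univ.inf' hne X)/2 with hε
  have hε0 : 0 < ε := by
    have : 0 < Finset.univ.inf' hne X := by
      rw [Finset.lt_inf'_iff]
      exact fun i _ => hX i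
    linarith
  have hεle : ∀ i, ε ≤ X i / 2 := by
    intro i
    have := Finset.inf'_le X (Finset.mem_univ i)
    rw [hε]
    linarith
  have hεlt : ε < 1/2 := lt_of_le_of_lt (hεle (Classical.arbitrary ι)) (by
    have := hXlt (Classical.arbitrary ι); linarith)
  -- constant c
  set c : ℝ := -(Finset.univ.sup' hne fun i => klf (X i) (X i/2)) with hc
  have hc0 : 0 < c := by
    rw [hc, neg_pos]
    apply (Finset.sup'_lt_iff hne).mpr
    intro i _
    exact klf_half_neg (X i) (hX i) (hXlt i)
  have hcle : ∀ i, klf (X i) (X i/2) ≤ -c := by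
    intro i
    rw [hc, neg_neg]
    exact Finset.le_sup' (fun i => klf (X i) (X i/2)) (Finset.mem_univ i)
  set r : ℝ := Real.exp (-c) with hr
  have hr0 : 0 < r := Real.exp_pos _
  have hr1 : r < 1 := Real.exp_lt_one_iff.mpr (by linarith)
  -- geometric bound
  obtain ⟨M, hM⟩ : ∃ M, ∀ n : ℕ, (n:ℝ)^D * r^n ≤ M := by
    have hs : Summable (fun n : ℕ => (n:ℝ)^D * r^n) :=
      summable_pow_mul_geometric_of_norm_lt_one D
        (by rw [Real.norm_eq_abs, abs_of_pos hr0]; exact hr1)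
    have hT := hs.tendsto_atTop_zero
    obtain ⟨M, hM⟩ := hT.bddAbove_range
    exact ⟨M, fun n => hM (Set.mem_range_self n)⟩
  set e1 : ℝ := Real.exp 1 with he1
  have he1pos : 0 < e1 := Real.exp_pos 1
  set B₁ : ℝ := e1/(Real.sqrt ε)^D with hB₁
  set B₂ : ℝ := e1 * (M + 1) with hB₂
  have hM0 : 0 ≤ M := le_trans (by norm_num : (0:ℝ) ≤ 0^D * r^0) (by simpa using hM 0)
  have hB₁0 : 0 < B₁ := by rw [hB₁]; positivity
  have hB₂0 : 0 < B₂ := by rw [hB₂]; positivity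
  refine ⟨max B₁ B₂, lt_of_lt_of_le hB₁0 (le_max_left _ _), ?_⟩
  intro n hn K hsum
  have hn0 : (0:ℝ) < n := by exact_mod_cast hn
  have hn1 : (1:ℝ) ≤ n := by exact_mod_cast hn
  have hnt : (0:ℝ) < (n:ℝ) ^ t := Real.rpow_pos_of_pos hn0 t
  by_cases hgood : ∀ i, ε * n < K i
  -- GOOD REGION
  · have hK1 : ∀ i, 1 ≤ K i := by
      intro i
      have h := hgood i
      have hn0' : (0:ℝ) ≤ ε * n := mul_nonneg hε0.le (Nat.cast_nonneg n)
      have : (0:ℝ) < K i := lt_of_le_of_lt hn0' h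
      exact_mod_cast Nat.one_le_iff_ne_zero.mpr (by
        intro h0
        rw [h0] at this
        simp at this)
    have hKpos : ∀ i, (0:ℝ) < (K i:ℝ) := fun i => by exact_mod_cast hK1 i
    have hstep1 := bound_strong X (fun i => (hX i).le) n hn K hsum hK1
    have hamgm : ∏ i, ((n:ℝ) * X i/(K i:ℝ))^(K i) ≤ 1 := by
      have h := amgm_nat Finset.univ (fun i => (n:ℝ) * X i/(K i:ℝ))
        (fun i _ => div_nonneg (mul_nonneg (Nat.cast_nonneg n) (hX i).le)
          (Nat.cast_nonneg _)) K n (Nat.one_le_iff_ne_zero.mp hn) hsum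
      have heq : ∑ i, ((K i:ℝ)/(n:ℝ)) * ((n:ℝ) * X i/(K i:ℝ)) = 1 := by
        rw [← hX1]
        apply Finset.sum_congr rfl
        intro i _
        have := hKpos i
        field_simp
      rw [heq, one_pow] at h
      exact h
    have hsqprod : (Real.sqrt (ε * n))^D ≤ ∏ i, Real.sqrt (K i) := by
      have he : (Real.sqrt (ε * n))^D = ∏ _i : ι, Real.sqrt (ε * n) := by
        rw [Finset.prod_const, Finset.card_univ]
      rw [he]
      apply Finset.prod_le_prod (fun i _ => Real.sqrt_nonneg _)
      intro i _
      exact Real.sqrt_le_sqrt (hgood i).le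
    have hεn : (0:ℝ) < ε * n := mul_pos hε0 hn0
    have hsqpos : (0:ℝ) < (Real.sqrt (ε * n))^D := pow_pos (Real.sqrt_pos.mpr hεn) D
    have hinv : (∏ i, Real.sqrt (K i))⁻¹ ≤ ((Real.sqrt (ε * n))^D)⁻¹ :=
      inv_anti₀ hsqpos hsqprod
    have hstep2 : (n.factorial:ℝ) / (∏ i, ((K i).factorial:ℝ)) * ∏ i, X i ^ K i
        ≤ e1 * Real.sqrt n * ((Real.sqrt (ε * n))^D)⁻¹ := by
      calc (n.factorial:ℝ) / (∏ i, ((K i).factorial:ℝ)) * ∏ i, X i ^ K i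
          ≤ e1 * Real.sqrt n * (∏ i, Real.sqrt (K i))⁻¹
              * ∏ i, ((n:ℝ) * X i/(K i:ℝ))^(K i) := hstep1
        _ ≤ e1 * Real.sqrt n * ((Real.sqrt (ε * n))^D)⁻¹ * 1 := by
            apply mul_le_mul
            · exact mul_le_mul_of_nonneg_left hinv
                (mul_nonneg he1pos.le (Real.sqrt_nonneg _))
            · exact hamgm
            · exact Finset.prod_nonneg fun i _ => pow_nonneg (div_nonneg
                (mul_nonneg (Nat.cast_nonneg n) (hX i).le) (Nat.cast_nonneg _)) _
            · exact mul_nonneg (mul_nonneg he1pos.le (Real.sqrt_nonneg _))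
                (inv_nonneg.mpr hsqpos.le)
        _ = e1 * Real.sqrt n * ((Real.sqrt (ε * n))^D)⁻¹ := by ring
    -- convert to rpow form
    have hsn2 : ((Real.sqrt (ε*(n:ℝ)))^D) = (Real.sqrt ε)^D * (n:ℝ)^(((D:ℕ):ℝ)/2) := by
      rw [Real.sqrt_mul hε0.le, mul_pow]
      congr 1
      rw [Real.sqrt_eq_rpow, ← Real.rpow_natCast ((n:ℝ)^((1:ℝ)/2)) D,
        ← Real.rpow_mul hn0.le]
      congr 1
      ring
    have hpow : (n:ℝ)^((1:ℝ)/2) * ((n:ℝ)^(((D:ℕ):ℝ)/2))⁻¹ = ((n:ℝ)^t)⁻¹ := by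
      rw [← Real.rpow_neg hn0.le, ← Real.rpow_add hn0, ← Real.rpow_neg hn0.le]
      congr 1
      rw [ht, hDcast]
      ring
    have hkey : e1 * Real.sqrt n * ((Real.sqrt (ε * n))^D)⁻¹ = B₁ / (n:ℝ)^t := by
      have step : e1 * Real.sqrt n * ((Real.sqrt (ε * n))^D)⁻¹
          = e1 * ((Real.sqrt ε)^D)⁻¹ * ((n:ℝ)^((1:ℝ)/2) * ((n:ℝ)^(((D:ℕ):ℝ)/2))⁻¹) := by
        rw [hsn2, Real.sqrt_eq_rpow, mul_inv]
        ring
      rw [step, hpow, hB₁, div_div, div_eq_mul_inv, mul_inv, mul_assoc]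
    calc (n.factorial:ℝ) / (∏ i, ((K i).factorial:ℝ)) * ∏ i, X i ^ K i
        ≤ e1 * Real.sqrt n * ((Real.sqrt (ε * n))^D)⁻¹ := hstep2
      _ = B₁ / (n:ℝ)^t := hkey
      _ ≤ max B₁ B₂ / (n:ℝ)^t := by
          gcongr
          exact le_max_left _ _
  -- BAD REGION
  · push_neg at hgood
    obtain ⟨j, hj⟩ := hgood
    set q : ℝ := (K j:ℝ)/(n:ℝ) with hq
    have hq0 : 0 ≤ q := div_nonneg (Nat.cast_nonneg _) (Nat.cast_nonneg _)
    have hqε : q ≤ ε := by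
      rw [hq, div_le_iff₀ hn0]
      linarith [hj]
    have hq2 : q ≤ X j / 2 := le_trans hqε (hεle j)
    have hq1 : q < 1 := by
      have := hXlt j
      linarith
    have hKjlt : (K j:ℝ) < n := by
      have : q * n < 1 * n := by
        apply mul_lt_mul_of_pos_right hq1 hn0
      rw [hq, div_mul_cancel₀ _ hn0.ne'] at this
      linarith
    have hKjn : K j < n := by exact_mod_cast hKjlt
    set N' : ℕ := n - K j with hN'
    have hN'cast : (N':ℝ) = (n:ℝ) - (K j:ℝ) := by
      rw [hN']
      push_cast [Nat.cast_sub hKjn.le]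
      ring
    have hN'pos : 0 < N' := Nat.sub_pos_of_lt hKjn
    have hN'posR : (0:ℝ) < N' := by exact_mod_cast hN'pos
    have hsum_erase : ∑ i ∈ Finset.univ.erase j, K i = N' := by
      have h := Finset.sum_erase_add Finset.univ K (Finset.mem_univ j)
      rw [hsum] at h
      omega
    -- step 1: weak bound
    have hstep1 := bound_weak X (fun i => (hX i).le) n hn K hsum
    -- step 2: split off j
    have hsplit : ∏ i, ((n:ℝ) * X i/(K i:ℝ))^(K i)
        = ((n:ℝ) * X j/(K j:ℝ))^(K j)
          * ∏ i ∈ Finset.univ.erase j, ((n:ℝ) * X i/(K i:ℝ))^(K i) :=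
      (Finset.mul_prod_erase Finset.univ _ (Finset.mem_univ j)).symm
    -- step 3: amgm on the complement
    have hz : ∀ i ∈ Finset.univ.erase j, (0:ℝ) ≤ (n:ℝ) * X i/(K i:ℝ) :=
      fun i _ => div_nonneg (mul_nonneg (Nat.cast_nonneg n) (hX i).le) (Nat.cast_nonneg _)
    have hstep3 : ∏ i ∈ Finset.univ.erase j, ((n:ℝ) * X i/(K i:ℝ))^(K i)
        ≤ ((n:ℝ) * (1 - X j)/(N':ℝ))^(N' : ℕ) := by
      refine le_trans (amgm_nat (Finset.univ.erase j) _ hz K N' hN'pos.ne' hsum_erase) ?_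
      apply pow_le_pow_left₀
      · apply Finset.sum_nonneg
        intro i hi
        exact mul_nonneg (div_nonneg (Nat.cast_nonneg _) (Nat.cast_nonneg _)) (hz i hi)
      have hterm : ∀ i ∈ Finset.univ.erase j,
          ((K i:ℝ)/(N':ℝ)) * ((n:ℝ) * X i/(K i:ℝ)) ≤ (n:ℝ)/(N':ℝ) * X i := by
        intro i _
        rcases eq_or_ne (K i) 0 with h0|h0
        · rw [h0]
          simp only [Nat.cast_zero, zero_div, zero_mul]
          exact mul_nonneg (div_nonneg hn0.le hN'posR.le) (hX i).le
        · have : (K i:ℝ) ≠ 0 := Nat.cast_ne_zero.mpr h0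
          apply le_of_eq
          field_simp
      calc ∑ i ∈ Finset.univ.erase j, ((K i:ℝ)/(N':ℝ)) * ((n:ℝ) * X i/(K i:ℝ))
          ≤ ∑ i ∈ Finset.univ.erase j, (n:ℝ)/(N':ℝ) * X i := Finset.sum_le_sum hterm
        _ = (n:ℝ)/(N':ℝ) * (1 - X j) := by
            rw [← Finset.mul_sum, Finset.sum_erase_eq_sub (Finset.mem_univ j), hX1]
        _ = (n:ℝ) * (1 - X j)/(N':ℝ) := by ring
    -- step 4: exponential form
    have hXj1 : 0 < 1 - X j := by have := hXlt j; linarith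
    have hq1' : 0 < 1 - q := by linarith
    have e2 : ((n:ℝ) * (1 - X j)/(N':ℝ))^(N':ℕ)
        = Real.exp ((N':ℝ) * (Real.log (1 - X j) - Real.log (1 - q))) := by
      have hbase : (n:ℝ) * (1 - X j)/(N':ℝ) = (1 - X j)/(1 - q) := by
        rw [hN'cast, hq]
        field_simp
      rw [hbase, ← Real.exp_log (div_pos hXj1 hq1'), ← Real.exp_nat_mul,
        Real.log_div hXj1.ne' hq1'.ne']
    have e1' : ((n:ℝ) * X j/(K j:ℝ))^(K j)
        = Real.exp ((K j:ℝ) * (Real.log (X j) - Real.log q)) := by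
      rcases eq_or_ne (K j) 0 with h0|h0
      · rw [h0]
        simp
      · have hKj0 : (0:ℝ) < (K j:ℝ) := by
          have := Nat.pos_of_ne_zero h0
          exact_mod_cast this
        have hq0' : 0 < q := div_pos hKj0 hn0
        have hbase : (n:ℝ) * X j/(K j:ℝ) = X j / q := by
          rw [hq]
          field_simp
        rw [hbase, ← Real.exp_log (div_pos (hX j) hq0'), ← Real.exp_nat_mul,
          Real.log_div (hX j).ne' hq0'.ne']
    have hcombine : ((n:ℝ) * X j/(K j:ℝ))^(K j) * ((n:ℝ) * (1 - X j)/(N':ℝ))^(N':ℕ)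
        = Real.exp ((n:ℝ) * klf (X j) q) := by
      rw [e1', e2, ← Real.exp_add]
      congr 1
      have hKjq : (K j:ℝ) = (n:ℝ) * q := by
        rw [hq]
        field_simp
      rw [hN'cast, hKjq, klf]
      ring
    -- step 5: klf bound
    have hklf : klf (X j) q ≤ -c :=
      le_trans (klf_le_half (X j) q (hX j) (hXlt j) hq0 hq2) (hcle j)
    have hexp : Real.exp ((n:ℝ) * klf (X j) q) ≤ r^n := by
      rw [hr, ← Real.exp_nat_mul]
      apply Real.exp_le_exp.mpr
      have : (0:ℝ) ≤ n := hn0.le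
      calc (n:ℝ) * klf (X j) q ≤ (n:ℝ) * (-c) :=
            mul_le_mul_of_nonneg_left hklf this
        _ = (n:ℝ) * (-c) := rfl
    -- put together
    have hmain : (n.factorial:ℝ) / (∏ i, ((K i).factorial:ℝ)) * ∏ i, X i ^ K i
        ≤ e1 * Real.sqrt n * r^n := by
      refine le_trans hstep1 ?_
      apply mul_le_mul_of_nonneg_left _ (mul_nonneg he1pos.le (Real.sqrt_nonneg _))
      calc ∏ i, ((n:ℝ) * X i/(K i:ℝ))^(K i)
          = ((n:ℝ) * X j/(K j:ℝ))^(K j)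
            * ∏ i ∈ Finset.univ.erase j, ((n:ℝ) * X i/(K i:ℝ))^(K i) := hsplit
        _ ≤ ((n:ℝ) * X j/(K j:ℝ))^(K j) * ((n:ℝ) * (1 - X j)/(N':ℝ))^(N':ℕ) := by
            apply mul_le_mul_of_nonneg_left hstep3
            exact pow_nonneg (div_nonneg (mul_nonneg (Nat.cast_nonneg n) (hX j).le)
              (Nat.cast_nonneg _)) _
        _ = Real.exp ((n:ℝ) * klf (X j) q) := hcombine
        _ ≤ r^n := hexp
    -- final numeric bound
    have hfinal : e1 * Real.sqrt n * r^n ≤ B₂ / (n:ℝ)^t := by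
      have hrn : (0:ℝ) ≤ r^n := (pow_pos hr0 n).le
      have hsplit2 : Real.sqrt (n:ℝ) = (n:ℝ)^((1:ℝ)/2 + t) * ((n:ℝ)^t)⁻¹ := by
        rw [← Real.rpow_neg hn0.le, ← Real.rpow_add hn0, Real.sqrt_eq_rpow]
        congr 1
        ring
      have hexple : (n:ℝ)^((1:ℝ)/2 + t) ≤ (n:ℝ)^(D:ℕ) := by
        rw [← Real.rpow_natCast (n:ℝ) D]
        apply Real.rpow_le_rpow_of_exponent_le hn1
        rw [ht, hDcast]
        have hD2 : (2:ℝ) ≤ (D:ℝ) := by exact_mod_cast hcard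
        nlinarith
      calc e1 * Real.sqrt n * r^n
          = e1 * ((n:ℝ)^((1:ℝ)/2 + t) * r^n) * ((n:ℝ)^t)⁻¹ := by
            rw [hsplit2]
            ring
        _ ≤ e1 * ((n:ℝ)^(D:ℕ) * r^n) * ((n:ℝ)^t)⁻¹ := by
            apply mul_le_mul_of_nonneg_right _ (inv_nonneg.mpr hnt.le)
            apply mul_le_mul_of_nonneg_left _ he1pos.le
            exact mul_le_mul_of_nonneg_right hexple hrn
        _ ≤ e1 * (M + 1) * ((n:ℝ)^t)⁻¹ := by
            apply mul_le_mul_of_nonneg_right _ (inv_nonneg.mpr hnt.le)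
            apply mul_le_mul_of_nonneg_left _ he1pos.le
            exact le_trans (hM n) (by linarith)
        _ = B₂ / (n:ℝ)^t := by
            rw [hB₂, div_eq_mul_inv]
    calc (n.factorial:ℝ) / (∏ i, ((K i).factorial:ℝ)) * ∏ i, X i ^ K i
        ≤ e1 * Real.sqrt n * r^n := hmain
      _ ≤ B₂ / (n:ℝ)^t := hfinal
      _ ≤ max B₁ B₂ / (n:ℝ)^t := by
          gcongr
          exact le_max_right _ _

noncomputable def optX (d : ℕ) (x : Fin d → ℝ) : Option (Fin d) → ℝ :=
  fun o => o.elim (1 - ∑ i, x i) x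

def optK (d n : ℕ) (k : Fin d → ℕ) : Option (Fin d) → ℕ :=
  fun o => o.elim (n - ∑ i, k i) k

lemma optK_sum (d n : ℕ) (k : Fin d → ℕ) (hs : ∑ i, k i ≤ n) :
    ∑ o, optK d n k o = n := by
  rw [Fintype.sum_option]
  simp only [optK, Option.elim]
  omega

lemma optX_sum (d : ℕ) (x : Fin d → ℝ) : ∑ o, optX d x o = 1 := by
  rw [Fintype.sum_option]
  simp only [optX, Option.elim]
  ring

lemma pmf_eq (d n : ℕ) (x : Fin d → ℝ) (k : Fin d → ℕ) :
    multinomialPMF d n x k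
      = (n.factorial:ℝ) / (∏ o, ((optK d n k o).factorial:ℝ))
        * ∏ o, (optX d x o) ^ (optK d n k o) := by
  rw [Fintype.prod_option, Fintype.prod_option]
  simp only [optK, optX, Option.elim]
  rw [multinomialPMF]
  ring

lemma mem_multiIndex {d n : ℕ} {k : Fin d → ℕ} :
    k ∈ multiIndex d n ↔ (∀ i, k i ≤ n) ∧ ∑ i, k i ≤ n := by
  unfold multiIndex
  rw [Finset.mem_filter, Fintype.mem_piFinset]
  simp only [Finset.mem_range]
  constructor
  · rintro ⟨h1, h2⟩
    exact ⟨fun i => Nat.lt_succ_iff.mp (h1 i), h2⟩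
  · rintro ⟨h1, h2⟩
    exact ⟨fun i => Nat.lt_succ_iff.mpr (h1 i), h2⟩

lemma sum_pmf_eq_one (d n : ℕ) (x : Fin d → ℝ) :
    ∑ k ∈ multiIndex d n, multinomialPMF d n x k = 1 := by
  classical
  have h := Finset.sum_pow_eq_sum_piAntidiag (Finset.univ : Finset (Option (Fin d)))
    (optX d x) n
  rw [show (∑ o ∈ Finset.univ, optX d x o) = 1 from optX_sum d x, one_pow] at h
  rw [h]
  apply Finset.sum_nbij' (i := fun k => optK d n k) (j := fun kc i => kc (some i))
  · intro k hk
    rw [Finset.mem_piAntidiag]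
    obtain ⟨h1, h2⟩ := mem_multiIndex.mp hk
    exact ⟨optK_sum d n k h2, fun i _ => Finset.mem_univ i⟩
  · intro kc hkc
    rw [Finset.mem_piAntidiag] at hkc
    obtain ⟨h1, _⟩ := hkc
    rw [mem_multiIndex]
    have hle : ∀ o, kc o ≤ n := by
      intro o
      rw [← h1]
      exact Finset.single_le_sum (fun i _ => Nat.zero_le _) (Finset.mem_univ o)
    constructor
    · exact fun i => hle (some i)
    · rw [← h1, Fintype.sum_option]
      omega
  · intro k hk
    funext i
    rfl
  · intro kc hkc
    rw [Finset.mem_piAntidiag] at hkc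
    obtain ⟨h1, _⟩ := hkc
    funext o
    cases o with
    | some i => rfl
    | none =>
      show n - ∑ i, kc (some i) = kc none
      rw [← h1, Fintype.sum_option]
      omega
  · intro k hk
    obtain ⟨h1, h2⟩ := mem_multiIndex.mp hk
    rw [pmf_eq d n x k]
    have hspec := Nat.multinomial_spec Finset.univ (optK d n k)
    have hcast : (∏ o, ((optK d n k o).factorial:ℝ)) * (Nat.multinomial Finset.univ (optK d n k) : ℝ)
        = (n.factorial : ℝ) := by
      rw [← Nat.cast_prod, ← Nat.cast_mul, hspec, optK_sum d n k h2]
    have hprodpos : (0:ℝ) < ∏ o, ((optK d n k o).factorial:ℝ) :=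
      Finset.prod_pos fun o _ => by exact_mod_cast (optK d n k o).factorial_pos
    have hdiv : (n.factorial:ℝ) / (∏ o, ((optK d n k o).factorial:ℝ))
        = (Nat.multinomial Finset.univ (optK d n k) : ℝ) := by
      rw [div_eq_iff hprodpos.ne', ← hcast]
      ring
    rw [hdiv]

lemma pmf_nonneg (d n : ℕ) (x : Fin d → ℝ) (k : Fin d → ℕ)
    (hx0 : ∀ i, 0 ≤ x i) (hx1 : ∑ i, x i ≤ 1) : 0 ≤ multinomialPMF d n x k := by
  unfold multinomialPMF
  apply mul_nonneg
  apply mul_nonneg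
  · apply div_nonneg (Nat.cast_nonneg _)
    exact mul_nonneg (Nat.cast_nonneg _) (Finset.prod_nonneg fun i _ => Nat.cast_nonneg _)
  · exact pow_nonneg (by linarith) _
  · exact Finset.prod_nonneg fun i _ => pow_nonneg (hx0 i) _

theorem multinomial_cubed_sum_interior_bound (d : ℕ) (hd : 1 ≤ d)
    (x : Fin d → ℝ) (hx0 : ∀ i, 0 < x i) (hx1 : ∑ i, x i < 1) :
    ∃ C > (0 : ℝ), ∀ m : ℕ, 1 ≤ m →
      ∑ k ∈ multiIndex d (m - 1), (multinomialPMF d (m - 1) x k) ^ 3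
        ≤ C / (m : ℝ) ^ d := by
  classical
  have hXpos : ∀ o : Option (Fin d), 0 < optX d x o := by
    intro o
    cases o with
    | none => simpa [optX] using (by linarith : (0:ℝ) < 1 - ∑ i, x i)
    | some i => exact hx0 i
  have hcard : 2 ≤ Fintype.card (Option (Fin d)) := by
    simp only [Fintype.card_option, Fintype.card_fin]
    omega
  obtain ⟨B, hB0, hB⟩ := pointwise_bound_s17 (optX d x) hXpos (optX_sum d x) hcard
  have hcard' : ((Fintype.card (Option (Fin d)) - 1 : ℕ) : ℝ) = (d:ℝ) := by
    simp [Fintype.card_option]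
  rw [hcard'] at hB
  refine ⟨B^2 * 2^d + 1, by positivity, ?_⟩
  intro m hm
  set n := m - 1 with hn
  have hnonneg : ∀ k ∈ multiIndex d n, 0 ≤ multinomialPMF d n x k :=
    fun k _ => pmf_nonneg d n x k (fun i => (hx0 i).le) hx1.le
  have hsum1 := sum_pmf_eq_one d n x
  have hle1 : ∀ k ∈ multiIndex d n, multinomialPMF d n x k ≤ 1 := by
    intro k hk
    rw [← hsum1]
    exact Finset.single_le_sum hnonneg hk
  rcases eq_or_lt_of_le hm with hm1|hm2
  · -- m = 1
    have hmeq : m = 1 := hm1.symm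
    subst hmeq
    have h1 : ∑ k ∈ multiIndex d n, (multinomialPMF d n x k)^3
        ≤ ∑ k ∈ multiIndex d n, multinomialPMF d n x k := by
      apply Finset.sum_le_sum
      intro k hk
      calc (multinomialPMF d n x k)^3 ≤ (multinomialPMF d n x k)^1 :=
            pow_le_pow_of_le_one (hnonneg k hk) (hle1 k hk) (by norm_num)
        _ = multinomialPMF d n x k := pow_one _
    rw [hsum1] at h1
    have h0' : (0:ℝ) ≤ B^2 * 2^d := by positivity
    simpa using le_trans h1 (by linarith : (1:ℝ) ≤ B^2 * 2^d + 1)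
  · -- m ≥ 2
    have hn1 : 1 ≤ n := by omega
    have hn0R : (0:ℝ) < n := by exact_mod_cast hn1
    have hm0R : (0:ℝ) < m := by positivity
    have hptw : ∀ k ∈ multiIndex d n,
        multinomialPMF d n x k ≤ B / (n:ℝ)^((d:ℝ)/2) := by
      intro k hk
      obtain ⟨_, h2⟩ := mem_multiIndex.mp hk
      rw [pmf_eq d n x k]
      exact hB n hn1 (optK d n k) (optK_sum d n k h2)
    have hrpw : (0:ℝ) < (n:ℝ)^((d:ℝ)/2) := Real.rpow_pos_of_pos hn0R _
    have hsq : ((n:ℝ)^((d:ℝ)/2))^2 = (n:ℝ)^(d:ℕ) := by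
      rw [← Real.rpow_natCast ((n:ℝ)^((d:ℝ)/2)) 2, ← Real.rpow_mul hn0R.le,
        ← Real.rpow_natCast (n:ℝ) d]
      congr 1
      push_cast
      ring
    have hsqb : ∀ k ∈ multiIndex d n,
        (multinomialPMF d n x k)^2 ≤ B^2 / (n:ℝ)^(d:ℕ) := by
      intro k hk
      calc (multinomialPMF d n x k)^2 ≤ (B / (n:ℝ)^((d:ℝ)/2))^2 :=
            pow_le_pow_left₀ (hnonneg k hk) (hptw k hk) 2
        _ = B^2 / ((n:ℝ)^((d:ℝ)/2))^2 := by rw [div_pow]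
        _ = B^2 / (n:ℝ)^(d:ℕ) := by rw [hsq]
    have hmain : ∑ k ∈ multiIndex d n, (multinomialPMF d n x k)^3
        ≤ B^2 / (n:ℝ)^(d:ℕ) := by
      calc ∑ k ∈ multiIndex d n, (multinomialPMF d n x k)^3
          ≤ ∑ k ∈ multiIndex d n, (B^2 / (n:ℝ)^(d:ℕ)) * multinomialPMF d n x k := by
            apply Finset.sum_le_sum
            intro k hk
            calc (multinomialPMF d n x k)^3
                = (multinomialPMF d n x k)^2 * multinomialPMF d n x k := by ring
              _ ≤ (B^2 / (n:ℝ)^(d:ℕ)) * multinomialPMF d n x k :=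
                  mul_le_mul_of_nonneg_right (hsqb k hk) (hnonneg k hk)
        _ = (B^2 / (n:ℝ)^(d:ℕ)) * ∑ k ∈ multiIndex d n, multinomialPMF d n x k := by
            rw [Finset.mul_sum]
        _ = B^2 / (n:ℝ)^(d:ℕ) := by rw [hsum1, mul_one]
    have hnm : (m:ℝ) ≤ 2 * n := by
      have : (n:ℝ) = (m:ℝ) - 1 := by
        rw [hn]
        push_cast [Nat.cast_sub hm]
        ring
      rw [this]
      have : (2:ℝ) ≤ m := by exact_mod_cast hm2
      linarith
    have hpowle : (m:ℝ)^d ≤ 2^d * (n:ℝ)^d := by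
      calc (m:ℝ)^d ≤ (2 * n)^d := pow_le_pow_left₀ hm0R.le hnm d
        _ = 2^d * (n:ℝ)^d := mul_pow 2 _ d
    have hstep : B^2 / (n:ℝ)^(d:ℕ) ≤ B^2 * 2^d / (m:ℝ)^d := by
      rw [div_le_div_iff₀ (by positivity) (by positivity)]
      calc B^2 * (m:ℝ)^d ≤ B^2 * (2^d * (n:ℝ)^d) :=
            mul_le_mul_of_nonneg_left hpowle (by positivity)
        _ = B^2 * 2^d * (n:ℝ)^d := by ring
    calc ∑ k ∈ multiIndex d n, (multinomialPMF d n x k)^3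
        ≤ B^2 / (n:ℝ)^(d:ℕ) := hmain
      _ ≤ B^2 * 2^d / (m:ℝ)^d := hstep
      _ ≤ (B^2 * 2^d + 1) / (m:ℝ)^d := by
          apply div_le_div_of_nonneg_right ?_ (by positivity)
          linarith
end
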